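/- arXiv:0902.4869 — 4 statements merged into one kernel-verified Lean document; each statement's English description precedes it below -/
import Mathlib

section
/- Let A ∈ M_n(ℂ) be a Hermitian matrix with eigenvalues a_1 ≥ a_2 ≥ … ≥ a_n (listed with multiplicity), and let 1 ≤ k < n. Then Λ_k(A) equals the real interval [a_{n−k+1}, a_k] regarded as a subset of ℂ, i.e., Λ_k(A) = {x ∈ ℝ : a_{n−k+1} ≤ x ≤ a_k} (which is empty when a_{n−k+1} > a_k). -/
open scoped Classical
open Matrix

noncomputable section

/-- The rank-`k` numerical range of a matrix `A`. -/
def rankNumRange (n k : ℕ) (A : Matrix (Fin n) (Fin n) ℂ) : Set ℂ :=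
  {lam : ℂ | ∃ P : Matrix (Fin n) (Fin n) ℂ,
    P.IsHermitian ∧ P * P = P ∧ P.rank = k ∧ P * A * P = lam • P}

/-- The left closed half plane determined by the directed line through `a` and `b`. -/
def halfPlane (a b : ℂ) : Set ℂ :=
  {z : ℂ | 0 ≤ (((starRingEnd ℂ) b - (starRingEnd ℂ) a) * (z - a)).im}

/-- The left open half plane determined by the directed line through `a` and `b`. -/
def openHalfPlane (a b : ℂ) : Set ℂ :=
  {z : ℂ | 0 < (((starRingEnd ℂ) b - (starRingEnd ℂ) a) * (z - a)).im}

/-- The number of eigenvalues of `A`, counted with (algebraic) multiplicity,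
lying in the set `s`. -/
def eigCountIn {n : ℕ} (A : Matrix (Fin n) (Fin n) ℂ) (s : Set ℂ) : ℕ :=
  Multiset.card (A.charpoly.roots.filter (fun z => z ∈ s))

/-- The closed half plane `𝓗(d, ξ)`. -/
def cH (d ξ : ℝ) : Set ℂ :=
  {μ : ℂ | (Complex.exp (-(ξ : ℂ) * Complex.I) * μ).re ≤ d}

/-- The line `𝓛(d, ξ)`. -/
def cL (d ξ : ℝ) : Set ℂ :=
  {μ : ℂ | (Complex.exp (-(ξ : ℂ) * Complex.I) * μ).re = d}

/-- The open semicircular arc of the unit circle starting at `β`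
(traversed counterclockwise), without endpoints. -/
def openSemicircle (β : ℂ) : Set ℂ :=
  {z : ℂ | ∃ t : ℝ, 0 < t ∧ t < Real.pi ∧ z = Complex.exp (t * Complex.I) * β}

/-- A set of points on the unit circle is `k`-regular if every open semicircular
arc contains at least `k` of its elements. -/
def IsKRegular (k : ℕ) (S : Set ℂ) : Prop :=
  ∀ β : ℂ, ‖β‖ = 1 → k ≤ (S ∩ openSemicircle β).ncard

open Polynomial in
lemma charpoly_diag_roots {n : ℕ} (d : Fin n → ℂ) :
    (Matrix.diagonal d).charpoly.roots = Multiset.map d Finset.univ.val := by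
  have h : (Matrix.diagonal d).charpoly = ∏ i, (X - C (d i)) := by
    rw [Matrix.charpoly, Matrix.charmatrix, ← Matrix.det_diagonal (d := fun i => X - C (d i))]
    congr 1
    ext i j
    by_cases h : i = j <;>
      simp [h, Matrix.diagonal_apply, Matrix.scalar_apply, RingHom.mapMatrix_apply]
  rw [h]
  have := Polynomial.roots_multiset_prod_X_sub_C (Multiset.map d Finset.univ.val)
  rw [Multiset.map_map] at this
  rw [← this]
  congr 1

open Polynomial in
lemma charpoly_conj_unitary {n : ℕ} (U : Matrix.unitaryGroup (Fin n) ℂ)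
    (B : Matrix (Fin n) (Fin n) ℂ) :
    ((U : Matrix (Fin n) (Fin n) ℂ) * B * (star U : Matrix (Fin n) (Fin n) ℂ)).charpoly
      = B.charpoly := by
  set V : Matrix (Fin n) (Fin n) ℂ := (U : Matrix (Fin n) (Fin n) ℂ) with hV
  have hVV : V * star V = 1 := Matrix.mem_unitaryGroup_iff.mp U.2
  have hmap1 : (V.map (C : ℂ →+* ℂ[X])) * ((star V).map C) = 1 := by
    rw [← Matrix.map_mul, hVV]
    simp
  have key : charmatrix (V * B * star V)
      = (V.map C) * charmatrix B * ((star V).map C) := by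
    rw [charmatrix, charmatrix]
    rw [Matrix.mul_sub, Matrix.sub_mul]
    congr 1
    · calc (scalar (Fin n)) X
          = (scalar (Fin n)) X * ((V.map C) * ((star V).map C)) := by rw [hmap1, mul_one]
        _ = (V.map C) * (scalar (Fin n)) X * ((star V).map C) := by
            rw [← mul_assoc, (Matrix.scalar_commute X (fun r => (Commute.all X r)) (V.map C)).eq]
    · simp [RingHom.mapMatrix_apply, Matrix.map_mul]
  rw [Matrix.charpoly, key, Matrix.det_mul, Matrix.det_mul, Matrix.charpoly]
  have h1 : (V.map (C : ℂ →+* ℂ[X])).det * ((star V).map C).det = 1 := by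
    rw [← Matrix.det_mul, hmap1, Matrix.det_one]
  calc (V.map (C : ℂ →+* ℂ[X])).det * (charmatrix B).det * ((star V).map C).det
      = (charmatrix B).det * ((V.map (C : ℂ →+* ℂ[X])).det * ((star V).map C).det) := by ring
    _ = (charmatrix B).det := by rw [h1, mul_one]

lemma rankNumRange_conj_subset {n k : ℕ} (U : Matrix.unitaryGroup (Fin n) ℂ)
    (B : Matrix (Fin n) (Fin n) ℂ) :
    rankNumRange n k B ⊆ rankNumRange n k
      ((U : Matrix (Fin n) (Fin n) ℂ) * B * (star U : Matrix (Fin n) (Fin n) ℂ)) := by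
  rintro lam ⟨P, hHerm, hIdem, hRank, hEq⟩
  set V : Matrix (Fin n) (Fin n) ℂ := (U : Matrix (Fin n) (Fin n) ℂ)
  have hVV : V * star V = 1 := Matrix.mem_unitaryGroup_iff.mp U.2
  have hVV' : star V * V = 1 := Matrix.mem_unitaryGroup_iff'.mp U.2
  have hdetV : IsUnit V.det := by
    apply IsUnit.of_mul_eq_one (star V).det
    rw [← Matrix.det_mul, hVV, Matrix.det_one]
  have hdetV' : IsUnit (star V).det := by
    apply IsUnit.of_mul_eq_one V.det
    rw [← Matrix.det_mul, hVV', Matrix.det_one]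
  refine ⟨V * P * star V, ?_, ?_, ?_, ?_⟩
  · have := Matrix.isHermitian_mul_mul_conjTranspose V hHerm
    rwa [← Matrix.star_eq_conjTranspose] at this
  · calc V * P * star V * (V * P * star V) = V * (P * (star V * V) * P) * star V := by
          simp only [mul_assoc]
      _ = V * P * star V := by rw [hVV']; simp only [mul_one, hIdem, mul_assoc]
  · rw [Matrix.rank_mul_eq_left_of_isUnit_det _ _ hdetV',
      Matrix.rank_mul_eq_right_of_isUnit_det _ _ hdetV, hRank]
  · calc V * P * star V * (V * B * star V) * (V * P * star V)
        = V * (P * (star V * V) * B * (star V * V) * P) * star V := by simp only [mul_assoc]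
      _ = V * (P * B * P) * star V := by rw [hVV']; simp only [mul_one, mul_assoc]
      _ = lam • (V * P * star V) := by
          rw [hEq, Matrix.mul_smul, Matrix.smul_mul]

lemma rankNumRange_conj {n k : ℕ} (U : Matrix.unitaryGroup (Fin n) ℂ)
    (B : Matrix (Fin n) (Fin n) ℂ) :
    rankNumRange n k ((U : Matrix (Fin n) (Fin n) ℂ) * B *
      (star U : Matrix (Fin n) (Fin n) ℂ)) = rankNumRange n k B := by
  apply le_antisymm
  · have h := rankNumRange_conj_subset (k := k) (star U)
      ((U : Matrix (Fin n) (Fin n) ℂ) * B * (star U : Matrix (Fin n) (Fin n) ℂ))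
    rw [Unitary.coe_star] at h
    have hVV' : (star U : Matrix (Fin n) (Fin n) ℂ) * (U : Matrix (Fin n) (Fin n) ℂ) = 1 :=
      Matrix.mem_unitaryGroup_iff'.mp U.2
    have heq : (star U : Matrix (Fin n) (Fin n) ℂ) *
        ((U : Matrix (Fin n) (Fin n) ℂ) * B * (star U : Matrix (Fin n) (Fin n) ℂ)) *
        (star (star U) : Matrix (Fin n) (Fin n) ℂ) = B := by
      rw [star_star]
      calc (star U : Matrix (Fin n) (Fin n) ℂ) *
          ((U : Matrix (Fin n) (Fin n) ℂ) * B * (star U : Matrix (Fin n) (Fin n) ℂ)) *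
          (U : Matrix (Fin n) (Fin n) ℂ)
          = ((star U : Matrix (Fin n) (Fin n) ℂ) * (U : Matrix (Fin n) (Fin n) ℂ)) * B *
            ((star U : Matrix (Fin n) (Fin n) ℂ) * (U : Matrix (Fin n) (Fin n) ℂ)) := by
            simp only [mul_assoc]
        _ = B := by rw [hVV', one_mul, mul_one]
    rw [heq] at h
    exact h
  · exact rankNumRange_conj_subset U B

lemma diag_subset {n k : ℕ} (hk : 1 ≤ k) (hkn : k < n) (a : Fin n → ℝ)
    (hmono : ∀ i j : Fin n, i ≤ j → a j ≤ a i) :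
    rankNumRange n k (Matrix.diagonal (fun i => ((a i : ℝ) : ℂ))) ⊆
      {z : ℂ | z.im = 0 ∧ a ⟨n - k, Nat.sub_lt (by omega) hk⟩ ≤ z.re ∧
        z.re ≤ a ⟨k - 1, Nat.lt_of_le_of_lt (Nat.sub_le k 1) hkn⟩} := by
  set D := Matrix.diagonal (fun i => ((a i : ℝ) : ℂ)) with hDdef
  rintro lam ⟨P, hH, hI, hR, hE⟩
  -- existence of fixed vectors vanishing on prescribed k-1 coordinates
  have key : ∀ g : Fin (k-1) → Fin n,
      ∃ v : Fin n → ℂ, v ≠ 0 ∧ P *ᵥ v = v ∧ ∀ i, v (g i) = 0 := by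
    intro g
    set V := LinearMap.range P.mulVecLin with hV
    set F := LinearMap.funLeft ℂ ℂ g with hF
    set W := LinearMap.ker F with hW
    have hVrank : Module.finrank ℂ V = k := hR
    have hWrank : n - (k-1) ≤ Module.finrank ℂ W := by
      show n - (k-1) ≤ Module.finrank ℂ (LinearMap.ker F)
      have h1 := LinearMap.finrank_range_add_finrank_ker F
      have h2 : Module.finrank ℂ (Fin n → ℂ) = n := Module.finrank_fin_fun ℂ
      have h3 : Module.finrank ℂ (LinearMap.range F) ≤ k - 1 := by
        have := (LinearMap.range F).finrank_le
        rwa [Module.finrank_fin_fun] at this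
      omega
    have hsup : Module.finrank ℂ (V ⊔ W : Submodule ℂ (Fin n → ℂ)) ≤ n := by
      have := (V ⊔ W).finrank_le
      rwa [Module.finrank_fin_fun] at this
    have hinf : 0 < Module.finrank ℂ (V ⊓ W : Submodule ℂ (Fin n → ℂ)) := by
      have := Submodule.finrank_sup_add_finrank_inf_eq V W
      omega
    have hne : (V ⊓ W : Submodule ℂ (Fin n → ℂ)) ≠ ⊥ := by
      intro hbot
      rw [hbot, finrank_bot] at hinf
      omega
    obtain ⟨v, hv, hvne⟩ := (Submodule.ne_bot_iff _).mp hne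
    obtain ⟨hvV, hvW⟩ := Submodule.mem_inf.mp hv
    obtain ⟨u, hu⟩ := hvV
    refine ⟨v, hvne, ?_, ?_⟩
    · rw [Matrix.mulVecLin_apply] at hu
      rw [← hu, Matrix.mulVec_mulVec, hI]
    · intro i
      have : F v = 0 := hvW
      have := congrFun this i
      rw [hF] at this
      simpa [LinearMap.funLeft_apply] using this
  -- evaluation of lambda on a fixed vector
  have eval : ∀ v : Fin n → ℂ, v ≠ 0 → P *ᵥ v = v →
      lam = (((∑ x, a x * Complex.normSq (v x)) / (∑ x, Complex.normSq (v x)) : ℝ) : ℂ) ∧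
      0 < (∑ x, Complex.normSq (v x)) := by
    intro v hvne hPv
    have hS : 0 < (∑ x, Complex.normSq (v x)) := by
      apply Finset.sum_pos'
      · intro i _
        exact Complex.normSq_nonneg _
      · have : ∃ x, v x ≠ 0 := by
          by_contra hcon
          push_neg at hcon
          exact hvne (funext hcon)
        obtain ⟨x, hx⟩ := this
        exact ⟨x, Finset.mem_univ x, Complex.normSq_pos.mpr hx⟩
    have hfix : star v ᵥ* P = star v := by
      have h1 : star v ᵥ* Pᴴ = star v := by rw [← Matrix.star_mulVec, hPv]
      rwa [hH.eq] at h1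
    have hmain : star v ⬝ᵥ ((P * D * P) *ᵥ v) = star v ⬝ᵥ ((lam • P) *ᵥ v) := by rw [hE]
    have hlhs : star v ⬝ᵥ ((P * D * P) *ᵥ v)
        = ((∑ x, a x * Complex.normSq (v x) : ℝ) : ℂ) := by
      rw [← Matrix.mulVec_mulVec, ← Matrix.mulVec_mulVec, hPv,
        Matrix.dotProduct_mulVec, hfix]
      rw [dotProduct]
      push_cast
      apply Finset.sum_congr rfl
      intro x _
      simp only [Pi.star_apply, hDdef, Matrix.mulVec_diagonal]
      rw [show star (v x) = (starRingEnd ℂ) (v x) from rfl]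
      rw [mul_comm ((a x : ℂ)) (v x), ← mul_assoc]
      rw [Complex.normSq_eq_conj_mul_self.symm]
      ring
    have hrhs : star v ⬝ᵥ ((lam • P) *ᵥ v)
        = lam * ((∑ x, Complex.normSq (v x) : ℝ) : ℂ) := by
      rw [Matrix.smul_mulVec, hPv, dotProduct_smul]
      congr 1
      rw [dotProduct]
      push_cast
      apply Finset.sum_congr rfl
      intro x _
      simp only [Pi.star_apply]
      exact Complex.normSq_eq_conj_mul_self.symm
    rw [hlhs, hrhs] at hmain
    constructor
    · rw [Complex.ofReal_div]
      rw [eq_div_iff (by exact_mod_cast hS.ne' :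
        ((∑ x, Complex.normSq (v x) : ℝ) : ℂ) ≠ 0)]
      exact hmain.symm
    · exact hS
  constructor
  -- im = 0, and we piggyback: get it from one vector
  case _ =>
    obtain ⟨v, hvne, hPv, _⟩ := key (fun i => ⟨i.val, by omega⟩)
    have := (eval v hvne hPv).1
    rw [this]
    exact Complex.ofReal_im _
  case _ =>
    constructor
    · -- lower bound
      obtain ⟨v, hvne, hPv, hvanish⟩ := key (fun i => ⟨n - 1 - i.val, by omega⟩)
      obtain ⟨hlam, hS⟩ := eval v hvne hPv
      have hsupp : ∀ x : Fin n, v x ≠ 0 → a ⟨n - k, by omega⟩ ≤ a x := by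
        intro x hx
        have hxval : x.val ≤ n - k := by
          by_contra hcon
          push_neg at hcon
          have hik : n - 1 - x.val < k - 1 := by omega
          have := hvanish ⟨n - 1 - x.val, hik⟩
          have hgx : (⟨n - 1 - (n - 1 - x.val), by omega⟩ : Fin n) = x := by
            apply Fin.ext
            simp only []
            omega
          rw [hgx] at this
          exact hx this
        exact hmono x ⟨n - k, by omega⟩ (by exact hxval)
      have hT : (a ⟨n - k, by omega⟩) * (∑ x, Complex.normSq (v x))
          ≤ ∑ x, a x * Complex.normSq (v x) := by
        rw [Finset.mul_sum]
        apply Finset.sum_le_sum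
        intro x _
        by_cases hx : v x = 0
        · simp [hx]
        · exact mul_le_mul_of_nonneg_right (hsupp x hx) (Complex.normSq_nonneg _)
      rw [hlam]
      simp only [Complex.ofReal_re]
      rw [le_div_iff₀ hS]
      exact hT
    · -- upper bound
      obtain ⟨v, hvne, hPv, hvanish⟩ := key (fun i => ⟨i.val, by omega⟩)
      obtain ⟨hlam, hS⟩ := eval v hvne hPv
      have hsupp : ∀ x : Fin n, v x ≠ 0 → a x ≤ a ⟨k - 1, by omega⟩ := by
        intro x hx
        have hxval : k - 1 ≤ x.val := by
          by_contra hcon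
          push_neg at hcon
          have := hvanish ⟨x.val, by omega⟩
          have hgx : (⟨x.val, by omega⟩ : Fin n) = x := by
            apply Fin.ext
            rfl
          rw [hgx] at this
          exact hx this
        exact hmono ⟨k - 1, by omega⟩ x (by exact hxval)
      have hT : (∑ x, a x * Complex.normSq (v x))
          ≤ (a ⟨k - 1, by omega⟩) * (∑ x, Complex.normSq (v x)) := by
        rw [Finset.mul_sum]
        apply Finset.sum_le_sum
        intro x _
        by_cases hx : v x = 0
        · simp [hx]
        · exact mul_le_mul_of_nonneg_right (hsupp x hx) (Complex.normSq_nonneg _)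
      rw [hlam]
      simp only [Complex.ofReal_re]
      rw [div_le_iff₀ hS]
      exact hT

open scoped ComplexOrder in
lemma diag_mem {n k : ℕ} (hk : 1 ≤ k) (hkn : k < n) (a : Fin n → ℝ)
    (hmono : ∀ i j : Fin n, i ≤ j → a j ≤ a i) (l : ℝ)
    (hl1 : a ⟨n - k, Nat.sub_lt (by omega) hk⟩ ≤ l)
    (hl2 : l ≤ a ⟨k - 1, Nat.lt_of_le_of_lt (Nat.sub_le k 1) hkn⟩) :
    ((l : ℝ) : ℂ) ∈ rankNumRange n k (Matrix.diagonal (fun i => ((a i : ℝ) : ℂ))) := by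
  set D := Matrix.diagonal (fun i => ((a i : ℝ) : ℂ)) with hDdef
  -- index pairing
  set p : Fin k → Fin n := fun i => ⟨i.val, by omega⟩ with hp
  set q : Fin k → Fin n := fun i =>
    if h : i.val < n - k then ⟨n - 1 - i.val, by omega⟩ else ⟨i.val, by omega⟩ with hq
  have hqval : ∀ i : Fin k, (q i).val = if i.val < n - k then n - 1 - i.val else i.val := by
    intro i
    rw [hq]
    by_cases h : i.val < n - k
    · simp only [dif_pos h, if_pos h]
    · simp only [dif_neg h, if_neg h]
  have hpq_le : ∀ i : Fin k, a (q i) ≤ l ∧ l ≤ a (p i) := by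
    intro i
    constructor
    · refine le_trans (hmono ⟨n - k, by omega⟩ (q i) ?_) hl1
      show n - k ≤ (q i).val
      rw [hqval i]
      have := i.2
      split <;> omega
    · refine le_trans hl2 (hmono (p i) ⟨k - 1, by omega⟩ ?_)
      show (p i).val ≤ k - 1
      have := i.2
      simp only [hp]
      omega
  -- disjoint supports
  have hdisj : ∀ i j : Fin k, i ≠ j → ∀ x : Fin n,
      (x = p i ∨ x = q i) → (x = p j ∨ x = q j) → False := by
    intro i j hij x hxi hxj
    have hi2 := i.2
    have hj2 := j.2
    have hijval : i.val ≠ j.val := fun h => hij (Fin.ext h)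
    have hxi' : x.val = i.val ∨ x.val = (if i.val < n - k then n - 1 - i.val else i.val) := by
      rcases hxi with h | h
      · left; rw [h]
      · right; rw [h, hqval i]
    have hxj' : x.val = j.val ∨ x.val = (if j.val < n - k then n - 1 - j.val else j.val) := by
      rcases hxj with h | h
      · left; rw [h]
      · right; rw [h, hqval j]
    by_cases h1 : i.val < n - k <;> by_cases h2 : j.val < n - k <;>
      simp only [h1, h2, if_true, if_false, if_pos, if_neg, not_false_iff] at hxi' hxj' <;>
      omega
  -- the parameter t
  set t : Fin k → ℝ := fun i => (a (p i) - l) / (a (p i) - a (q i)) with ht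
  have htfacts : ∀ i : Fin k, 0 ≤ t i ∧ t i ≤ 1 ∧ (1 - t i) * a (p i) + t i * a (q i) = l := by
    intro i
    obtain ⟨hql, hlp⟩ := hpq_le i
    by_cases hpqe : a (p i) = a (q i)
    · have hlp' : l = a (p i) := le_antisymm hlp (by rw [hpqe]; exact hql)
      have ht0 : t i = 0 := by
        rw [ht]
        simp only []
        rw [show a (p i) - l = 0 by linarith]
        simp
      rw [ht0]
      refine ⟨le_refl 0, by norm_num, by rw [hlp']; ring⟩
    · have hlt : a (q i) < a (p i) := lt_of_le_of_ne (le_trans hql hlp) (Ne.symm hpqe)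
      have hd : 0 < a (p i) - a (q i) := by linarith
      refine ⟨div_nonneg (by linarith) (by linarith), ?_, ?_⟩
      · rw [ht]
        simp only []
        rw [div_le_one hd]
        linarith
      · rw [ht]
        simp only []
        field_simp
        ring
  set c : Fin k → ℝ := fun i => Real.sqrt (1 - t i) with hc
  set s : Fin k → ℝ := fun i => Real.sqrt (t i) with hs
  have hc2 : ∀ i, (c i) * (c i) = 1 - t i := fun i =>
    Real.mul_self_sqrt (by linarith [(htfacts i).2.1])
  have hs2 : ∀ i, (s i) * (s i) = t i := fun i =>
    Real.mul_self_sqrt (htfacts i).1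
  -- the isometry M
  set M : Matrix (Fin n) (Fin k) ℂ := Matrix.of (fun x i =>
    if x = p i then ((c i : ℝ) : ℂ) else if x = q i then ((s i : ℝ) : ℂ) else 0) with hM
  have hMapply : ∀ x i, M x i =
      if x = p i then ((c i : ℝ) : ℂ) else if x = q i then ((s i : ℝ) : ℂ) else 0 := by
    intro x i; rfl
  have hMzero : ∀ x i, x ≠ p i → x ≠ q i → M x i = 0 := by
    intro x i h1 h2
    rw [hMapply, if_neg h1, if_neg h2]
  -- the key sum computation
  have hsum : ∀ (w : Fin n → ℝ) (i j : Fin k),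
      (∑ x, (starRingEnd ℂ) (M x i) * (((w x : ℝ) : ℂ) * M x j))
        = if i = j then (((1 - t i) * w (p i) + t i * w (q i) : ℝ) : ℂ) else 0 := by
    intro w i j
    by_cases hij : i = j
    · subst hij
      rw [if_pos rfl]
      have hsub : ∑ x, (starRingEnd ℂ) (M x i) * (((w x : ℝ) : ℂ) * M x i)
          = ∑ x ∈ ({p i, q i} : Finset (Fin n)),
            (starRingEnd ℂ) (M x i) * (((w x : ℝ) : ℂ) * M x i) := by
        apply (Finset.sum_subset (Finset.subset_univ _) _).symm
        intro x _ hx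
        simp only [Finset.mem_insert, Finset.mem_singleton, not_or] at hx
        rw [hMzero x i hx.1 hx.2]
        simp
      rw [hsub]
      by_cases hpqe : p i = q i
      · have ht0 : t i = 0 := by
          rw [ht]
          simp only []
          rw [hpqe]
          simp
        have : ({p i, q i} : Finset (Fin n)) = {p i} := by rw [← hpqe]; simp
        rw [this, Finset.sum_singleton]
        rw [hMapply, if_pos rfl]
        have hc1 : c i = 1 := by rw [hc]; simp only []; rw [ht0]; simp
        rw [hc1, ht0]
        push_cast
        ring_nf
        simp
      · rw [Finset.sum_pair hpqe]
        rw [hMapply, if_pos rfl, hMapply, if_neg (Ne.symm hpqe), if_pos rfl]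
        rw [Complex.conj_ofReal, Complex.conj_ofReal]
        push_cast
        rw [show (c i : ℂ) * ((w (p i) : ℂ) * (c i : ℂ))
            = ((c i * c i : ℝ) : ℂ) * (w (p i) : ℂ) by push_cast; ring]
        rw [show (s i : ℂ) * ((w (q i) : ℂ) * (s i : ℂ))
            = ((s i * s i : ℝ) : ℂ) * (w (q i) : ℂ) by push_cast; ring]
        rw [hc2, hs2]
        push_cast
        ring
    · rw [if_neg hij]
      apply Finset.sum_eq_zero
      intro x _
      by_cases hxi : x = p i ∨ x = q i
      · by_cases hxj : x = p j ∨ x = q j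
        · exact absurd (hdisj i j hij x hxi hxj) (by simp)
        · push_neg at hxj
          rw [hMzero x j hxj.1 hxj.2]
          ring
      · push_neg at hxi
        rw [hMzero x i hxi.1 hxi.2]
        simp
  -- M is an isometry
  have hMM : Mᴴ * M = 1 := by
    ext i j
    rw [Matrix.mul_apply]
    have : ∀ x, Mᴴ i x * M x j = (starRingEnd ℂ) (M x i) * ((((1:ℝ) : ℂ)) * M x j) := by
      intro x
      rw [Matrix.conjTranspose_apply, Complex.ofReal_one, one_mul]
      rfl
    rw [Finset.sum_congr rfl (fun x _ => this x)]
    rw [hsum (fun _ => (1:ℝ)) i j]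
    by_cases hij : i = j
    · subst hij
      rw [if_pos rfl, Matrix.one_apply_eq]
      norm_num
    · rw [if_neg hij, Matrix.one_apply_ne hij]
  -- M compresses D to l * 1
  have hMDM : Mᴴ * (D * M) = ((l : ℝ) : ℂ) • (1 : Matrix (Fin k) (Fin k) ℂ) := by
    ext i j
    rw [Matrix.mul_apply]
    have : ∀ x, Mᴴ i x * (D * M) x j
        = (starRingEnd ℂ) (M x i) * (((a x : ℝ) : ℂ) * M x j) := by
      intro x
      rw [Matrix.conjTranspose_apply, hDdef, Matrix.diagonal_mul]
      rfl
    rw [Finset.sum_congr rfl (fun x _ => this x)]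
    rw [hsum a i j]
    by_cases hij : i = j
    · subst hij
      rw [if_pos rfl, (htfacts i).2.2, Matrix.smul_apply, Matrix.one_apply_eq,
        smul_eq_mul, mul_one]
    · rw [if_neg hij, Matrix.smul_apply, Matrix.one_apply_ne hij, smul_zero]
  -- assemble
  refine ⟨M * Mᴴ, Matrix.isHermitian_mul_conjTranspose_self M, ?_, ?_, ?_⟩
  · calc M * Mᴴ * (M * Mᴴ) = M * (Mᴴ * M) * Mᴴ := by
          simp only [Matrix.mul_assoc]
      _ = M * Mᴴ := by rw [hMM, Matrix.mul_one]
  · rw [Matrix.rank_self_mul_conjTranspose]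
    have h1 : (Mᴴ * M).rank = M.rank := Matrix.rank_conjTranspose_mul_self M
    rw [hMM] at h1
    rw [← h1, Matrix.rank_one, Fintype.card_fin]
  · calc M * Mᴴ * D * (M * Mᴴ) = M * (Mᴴ * (D * M)) * Mᴴ := by
          simp only [Matrix.mul_assoc]
      _ = ((l:ℝ):ℂ) • (M * Mᴴ) := by
          rw [hMDM, Matrix.mul_smul, Matrix.mul_one, Matrix.smul_mul]

lemma exists_perm_of_map_eq {n : ℕ} {f g : Fin n → ℝ}
    (h : Multiset.map f Finset.univ.val = Multiset.map g Finset.univ.val) :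
    ∃ σ : Equiv.Perm (Fin n), ∀ i, g (σ i) = f i := by
  have hcard : ∀ c : ℝ, Fintype.card {i : Fin n // f i = c}
      = Fintype.card {i : Fin n // g i = c} := by
    intro c
    have hf : Multiset.count c (Multiset.map f Finset.univ.val)
        = (Finset.univ.filter (fun i => c = f i)).card := by
      rw [Multiset.count_map]
      rfl
    have hg : Multiset.count c (Multiset.map g Finset.univ.val)
        = (Finset.univ.filter (fun i => c = g i)).card := by
      rw [Multiset.count_map]
      rfl
    have h1 : (Finset.univ.filter (fun i => c = f i)).card
        = (Finset.univ.filter (fun i => c = g i)).card := by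
      rw [← hf, ← hg, h]
    rw [Fintype.card_subtype, Fintype.card_subtype]
    simpa [eq_comm] using h1
  refine ⟨Equiv.ofFiberEquiv (f := f) (g := g)
    (fun c => Fintype.equivOfCardEq (hcard c)), fun i => Equiv.ofFiberEquiv_map _ i⟩

lemma perm_diag_conj {n : ℕ} (d : Fin n → ℂ) (σ : Equiv.Perm (Fin n)) :
    ∃ Q : Matrix.unitaryGroup (Fin n) ℂ,
      (Q : Matrix (Fin n) (Fin n) ℂ) * Matrix.diagonal (fun i => d (σ i)) *
        (star Q : Matrix (Fin n) (Fin n) ℂ) = Matrix.diagonal d := by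
  set Qm : Matrix (Fin n) (Fin n) ℂ :=
    Matrix.of (fun i j => if σ.symm i = j then 1 else 0) with hQm
  have happly : ∀ i j, Qm i j = if σ.symm i = j then 1 else 0 := fun i j => rfl
  have hstar : ∀ i j, (star Qm) i j = if σ.symm j = i then 1 else 0 := by
    intro i j
    rw [Matrix.star_apply, happly]
    split <;> simp
  have hQU : Qm ∈ Matrix.unitaryGroup (Fin n) ℂ := by
    rw [Matrix.mem_unitaryGroup_iff]
    ext i j
    rw [Matrix.mul_apply, Matrix.one_apply]
    have : ∀ x, Qm i x * (star Qm) x j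
        = if σ.symm i = x then (if σ.symm j = x then 1 else 0) else 0 := by
      intro x
      rw [happly, hstar]
      by_cases h1 : σ.symm i = x <;> by_cases h2 : σ.symm j = x <;> simp [h1, h2]
    rw [Finset.sum_congr rfl (fun x _ => this x), Finset.sum_ite_eq]
    simp only [Finset.mem_univ, if_true]
    by_cases hij : i = j
    · subst hij; simp
    · rw [if_neg hij, if_neg (fun hcon => hij (σ.symm.injective hcon).symm)]
  refine ⟨⟨Qm, hQU⟩, ?_⟩
  ext i j
  show (Qm * Matrix.diagonal (fun i => d (σ i)) * star Qm) i j = Matrix.diagonal d i j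
  rw [Matrix.mul_apply]
  have : ∀ x, (Qm * Matrix.diagonal (fun i => d (σ i))) i x * (star Qm) x j
      = if σ.symm j = x then (if σ.symm i = x then d (σ x) else 0) else 0 := by
    intro x
    rw [Matrix.mul_diagonal, happly, hstar]
    by_cases h1 : σ.symm i = x <;> by_cases h2 : σ.symm j = x <;> simp [h1, h2]
  rw [Finset.sum_congr rfl (fun x _ => this x), Finset.sum_ite_eq]
  simp only [Finset.mem_univ, if_true]
  rw [Matrix.diagonal_apply]
  by_cases hij : i = j
  · subst hij
    simp
  · rw [if_neg (fun hcon => hij (σ.symm.injective hcon)), if_neg hij]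

/-- For a Hermitian matrix with eigenvalues `a 0 ≥ a 1 ≥ … ≥ a (n-1)`
listed with multiplicity, the rank-k numerical range is the real interval
`[a_{n-k+1}, a_k]` (1-indexed) viewed as a subset of ℂ. -/
theorem stmt3 {n k : ℕ} (hk : 1 ≤ k) (hkn : k < n)
    (A : Matrix (Fin n) (Fin n) ℂ) (hA : A.IsHermitian)
    (a : Fin n → ℝ) (hmono : ∀ i j : Fin n, i ≤ j → a j ≤ a i)
    (hroots : A.charpoly.roots = Multiset.map (fun j => ((a j : ℝ) : ℂ)) Finset.univ.val) :
    rankNumRange n k A =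
      {z : ℂ | z.im = 0 ∧ a ⟨n - k, by omega⟩ ≤ z.re ∧ z.re ≤ a ⟨k - 1, by omega⟩} := by
  classical
  set ev := hA.eigenvalues with hev
  set Ddev : Matrix (Fin n) (Fin n) ℂ :=
    Matrix.diagonal (fun i => ((ev i : ℝ) : ℂ)) with hDdev
  have hspec := hA.spectral_theorem
  have hdiag_eq : Matrix.diagonal (RCLike.ofReal ∘ ev) = Ddev := rfl
  have hch : A.charpoly = Ddev.charpoly := by
    conv_lhs => rw [hspec, hdiag_eq]
    exact charpoly_conj_unitary hA.eigenvectorUnitary Ddev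
  have hroots2 : Multiset.map (fun i => ((ev i : ℝ) : ℂ)) Finset.univ.val
      = Multiset.map (fun j => ((a j : ℝ) : ℂ)) Finset.univ.val := by
    rw [← charpoly_diag_roots (fun i => ((ev i : ℝ) : ℂ)), ← hch, hroots]
  have hmm : Multiset.map ev Finset.univ.val = Multiset.map a Finset.univ.val := by
    apply Multiset.map_injective Complex.ofReal_injective
    rw [Multiset.map_map, Multiset.map_map]
    exact hroots2
  obtain ⟨σ, hσ⟩ := exists_perm_of_map_eq hmm
  have hdev : Ddev = Matrix.diagonal (fun i => ((a (σ i) : ℝ) : ℂ)) := by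
    have hfun : (fun i => ((ev i : ℝ) : ℂ)) = fun i => ((a (σ i) : ℝ) : ℂ) :=
      funext fun i => by rw [hσ i]
    rw [hDdev, hfun]
  obtain ⟨Q, hQ⟩ := perm_diag_conj (fun i => ((a i : ℝ) : ℂ)) σ
  have e1 : rankNumRange n k A = rankNumRange n k Ddev := by
    conv_lhs => rw [hspec, hdiag_eq]
    exact rankNumRange_conj hA.eigenvectorUnitary Ddev
  have e2 : rankNumRange n k (Matrix.diagonal (fun i => ((a i : ℝ) : ℂ)))
      = rankNumRange n k Ddev := by
    rw [← hQ, ← hdev]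
    exact rankNumRange_conj Q Ddev
  rw [e1, ← e2]
  apply le_antisymm
  · exact diag_subset hk hkn a hmono
  · rintro z ⟨h1, h2, h3⟩
    have hz : z = ((z.re : ℝ) : ℂ) := by
      apply Complex.ext
      · rfl
      · rw [h1, Complex.ofReal_im]
    rw [hz]
    exact diag_mem hk hkn a hmono z.re h2 h3
end
end

section
/- Let k ≥ 1 and let a_1, a_2 ∈ ℂ. If a_1 ≠ a_2 and P = conv{a_1, a_2} is the closed line segment joining them, then the smallest n for which there exists a normal matrix A ∈ M_n(ℂ) with Λ_k(A) = P is n = 2k: there is a normal A ∈ M_{2k}(ℂ) with Λ_k(A) = P, and no normal A ∈ M_n(ℂ) with n < 2k has Λ_k(A) = P. If a_1 = a_2 and P = {a_1}, then the smallest such n is n = k. -/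
open scoped Classical
open Matrix

noncomputable section

open Kronecker


lemma seg_infinite {a₁ a₂ : ℂ} (h : a₁ ≠ a₂) : (segment ℝ a₁ a₂).Infinite := by
  apply Set.infinite_of_injective_forall_mem
    (f := fun m : ℕ => (1 - ((m:ℝ)+2)⁻¹) • a₁ + ((m:ℝ)+2)⁻¹ • a₂)
  · intro m m' hmm
    simp only [] at hmm
    have h5 : (((m:ℝ)+2)⁻¹ : ℂ) = (((m':ℝ)+2)⁻¹ : ℂ) := by
      simp only [Complex.real_smul, Complex.ofReal_sub, Complex.ofReal_one,
        Complex.ofReal_inv] at hmm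
      push_cast at hmm
      have hstep : (((m:ℂ)+2))⁻¹ * (a₂ - a₁) = (((m':ℂ)+2))⁻¹ * (a₂ - a₁) := by
        linear_combination hmm
      have := mul_right_cancel₀ (sub_ne_zero.mpr (Ne.symm h)) hstep
      push_cast
      exact this
    have h6 : ((m:ℝ)+2)⁻¹ = ((m':ℝ)+2)⁻¹ := by exact_mod_cast h5
    have h7 : ((m:ℝ)+2) = ((m':ℝ)+2) := inv_inj.mp h6
    have h8 : (m:ℝ) = (m':ℝ) := by linarith
    exact_mod_cast h8
  · intro m
    refine ⟨1 - ((m:ℝ)+2)⁻¹, ((m:ℝ)+2)⁻¹, ?_, ?_, by ring, rfl⟩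
    · have : ((m:ℝ)+2)⁻¹ ≤ 1 := by
        rw [inv_le_one_iff₀]; right; linarith [Nat.cast_nonneg (α := ℝ) m]
      linarith
    · positivity

lemma mem_spectrum_of_mem_rankNumRange {n k : ℕ} (hn : n < 2 * k)
    (A : Matrix (Fin n) (Fin n) ℂ) {lam : ℂ} (hmem : lam ∈ rankNumRange n k A) :
    lam ∈ spectrum ℂ A := by
  obtain ⟨P, hherm, hidem, hrank, heq⟩ := hmem
  set B : Matrix (Fin n) (Fin n) ℂ := A - lam • 1 with hB
  have hPBP : P * B * P = 0 := by
    have h1 : P * (lam • 1) * P = lam • P := by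
      rw [mul_smul_comm, mul_one, smul_mul_assoc, hidem]
    rw [hB, Matrix.mul_sub, Matrix.sub_mul, heq, h1, sub_self]
  -- find nonzero kernel vector of B
  have hker : ∃ x : Fin n → ℂ, x ≠ 0 ∧ B.mulVec x = 0 := by
    by_contra hc
    push_neg at hc
    have hinj : Function.Injective B.mulVecLin := by
      rw [← LinearMap.ker_eq_bot, LinearMap.ker_eq_bot']
      intro x hx
      by_contra hx0
      exact hc x hx0 (by simpa using hx)
    -- build map from range P to ker P
    set p := P.mulVecLin with hp
    have hmem' : ∀ x ∈ LinearMap.range p, B.mulVecLin x ∈ LinearMap.ker p := by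
      rintro x ⟨y, rfl⟩
      have := congrArg (fun M => Matrix.mulVec M y) hPBP
      simp only [Matrix.zero_mulVec] at this
      rw [← Matrix.mulVec_mulVec, ← Matrix.mulVec_mulVec] at this
      simpa [LinearMap.mem_ker, hp] using this
    set g : LinearMap.range p →ₗ[ℂ] LinearMap.ker p :=
      LinearMap.codRestrict (LinearMap.ker p)
        (B.mulVecLin.comp (Submodule.subtype _)) (fun x => hmem' x x.2) with hg
    have hginj : Function.Injective g := by
      intro x y hxy
      apply Subtype.ext
      apply hinj
      exact congrArg Subtype.val hxy
    have hle := LinearMap.finrank_le_finrank_of_injective hginj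
    have hrk : Module.finrank ℂ (LinearMap.range p) = k := hrank
    have hrn := LinearMap.finrank_range_add_finrank_ker p
    rw [Module.finrank_fintype_fun_eq_card, Fintype.card_fin] at hrn
    omega
  obtain ⟨x, hx0, hx⟩ := hker
  have hnotunit : ¬ IsUnit B := by
    intro hu
    have hdet : IsUnit B.det := (Matrix.isUnit_iff_isUnit_det B).mp hu
    have := Matrix.nonsing_inv_mul B hdet
    have hx' : x = 0 := by
      calc x = (B⁻¹ * B).mulVec x := by rw [this, Matrix.one_mulVec]
        _ = B⁻¹.mulVec (B.mulVec x) := by rw [← Matrix.mulVec_mulVec]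
        _ = 0 := by rw [hx, Matrix.mulVec_zero]
    exact hx0 hx'
  rw [spectrum.mem_iff]
  intro hu
  apply hnotunit
  have : algebraMap ℂ (Matrix (Fin n) (Fin n) ℂ) lam - A = -B := by
    rw [Algebra.algebraMap_eq_smul_one, hB]; exact (neg_sub _ _).symm
  rw [this] at hu
  exact (IsUnit.neg_iff B).mp (by simpa using hu)

lemma diag_subset_segment {n k : ℕ} (hk : 1 ≤ k) (a₁ a₂ : ℂ) (d : Fin n → ℂ)
    (hd : ∀ i, d i = a₁ ∨ d i = a₂) :
    rankNumRange n k (Matrix.diagonal d) ⊆ segment ℝ a₁ a₂ := by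
  rintro lam ⟨P, hherm, hidem, hrank, heq⟩
  have hstar : ∀ i j, P i j = star (P j i) := by
    intro i j
    conv_lhs => rw [← hherm]
    rfl
  have hdiagP : ∀ j, P j j = ∑ l, (Complex.normSq (P l j) : ℂ) := by
    intro j
    conv_lhs => rw [← hidem]
    rw [Matrix.mul_apply]
    refine Finset.sum_congr rfl fun l _ => ?_
    rw [hstar j l, Complex.normSq_eq_conj_mul_self]
    rfl
  -- find j with P j j ≠ 0
  have hP0 : P ≠ 0 := by
    intro h0
    rw [h0, Matrix.rank_zero] at hrank
    omega
  have hexj : ∃ j, P j j ≠ 0 := by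
    by_contra hall
    push_neg at hall
    apply hP0
    ext l j
    have h1 := hdiagP j
    rw [hall j] at h1
    have h2 : ∑ l, Complex.normSq (P l j) = 0 := by
      have := congrArg Complex.re h1.symm
      simpa using this
    have h3 := (Finset.sum_eq_zero_iff_of_nonneg
      (fun l _ => Complex.normSq_nonneg (P l j))).mp h2 l (Finset.mem_univ l)
    simpa using Complex.normSq_eq_zero.mp h3
  obtain ⟨j, hj⟩ := hexj
  set c : ℝ := ∑ l, Complex.normSq (P l j) with hc
  have hcP : (c : ℂ) = P j j := by rw [hc]; push_cast; exact (hdiagP j).symm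
  have hc0 : c ≠ 0 := fun h => hj (by rw [← hcP, h, Complex.ofReal_zero])
  have hcpos : 0 < c := lt_of_le_of_ne
    (Finset.sum_nonneg fun l _ => Complex.normSq_nonneg _) (Ne.symm hc0)
  -- main identity
  have hmain : ∑ l, (Complex.normSq (P l j) : ℂ) * d l = lam * c := by
    have h1 := congrFun (congrFun heq j) j
    have h2 : (P * Matrix.diagonal d * P) j j = ∑ l, (Complex.normSq (P l j) : ℂ) * d l := by
      rw [Matrix.mul_apply]
      refine Finset.sum_congr rfl fun l _ => ?_
      rw [Matrix.mul_diagonal, hstar j l, Complex.normSq_eq_conj_mul_self,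
        Complex.star_def]
      ring
    rw [h2] at h1
    rw [h1]
    simp only [Matrix.smul_apply, smul_eq_mul]
    rw [← hcP]
  -- convex combination
  have hconv : Convex ℝ (segment ℝ a₁ a₂) := convex_segment a₁ a₂
  have hmem : ∑ l, (Complex.normSq (P l j) / c) • d l ∈ segment ℝ a₁ a₂ := by
    apply hconv.sum_mem
    · intro l _
      exact div_nonneg (Complex.normSq_nonneg _) hcpos.le
    · rw [← Finset.sum_div, ← hc, div_self hc0]
    · intro l _
      rcases hd l with h | h
      · rw [h]; exact left_mem_segment ℝ a₁ a₂
      · rw [h]; exact right_mem_segment ℝ a₁ a₂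
  have hlam : ∑ l, (Complex.normSq (P l j) / c) • d l = lam := by
    have hterm : ∀ l : Fin n, (Complex.normSq (P l j) / c : ℝ) • d l
        = ((c:ℂ))⁻¹ * ((Complex.normSq (P l j) : ℂ) * d l) := by
      intro l
      rw [Complex.real_smul]
      push_cast
      ring
    rw [Finset.sum_congr rfl fun l _ => hterm l, ← Finset.mul_sum, hmain]
    have hcc : (c:ℂ) ≠ 0 := by exact_mod_cast hc0
    field_simp
  rwa [hlam] at hmem

section Construction

variable (k : ℕ) (a₁ a₂ : ℂ)

/-- The 2x2 diagonal part. -/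
def dd : Fin 2 → ℂ := ![a₁, a₂]

def bigA : Matrix (Fin (2 * k)) (Fin (2 * k)) ℂ :=
  (Matrix.diagonal (fun p : Fin 2 × Fin k => dd a₁ a₂ p.1)).submatrix
    finProdFinEquiv.symm finProdFinEquiv.symm

lemma bigA_eq_diagonal : bigA k a₁ a₂
    = Matrix.diagonal ((fun p : Fin 2 × Fin k => dd a₁ a₂ p.1) ∘ finProdFinEquiv.symm) :=
  Matrix.submatrix_diagonal_equiv _ _

lemma bigA_normal : bigA k a₁ a₂ * (bigA k a₁ a₂)ᴴ = (bigA k a₁ a₂)ᴴ * bigA k a₁ a₂ := by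
  rw [bigA_eq_diagonal, Matrix.diagonal_conjTranspose, Matrix.diagonal_mul_diagonal,
    Matrix.diagonal_mul_diagonal]
  exact congrArg Matrix.diagonal (mul_comm _ _)

lemma mem_rankNumRange_bigA (hk : 1 ≤ k) {lam : ℂ} (hlam : lam ∈ segment ℝ a₁ a₂) :
    lam ∈ rankNumRange (2 * k) k (bigA k a₁ a₂) := by
  obtain ⟨t₁, t₂, ht₁, ht₂, hsum, rfl⟩ := hlam
  set x : ℂ := ((Real.sqrt t₁ : ℝ) : ℂ) with hx
  set y : ℂ := ((Real.sqrt t₂ : ℝ) : ℂ) with hy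
  have hxx : x * x = (t₁ : ℂ) := by
    rw [hx, ← Complex.ofReal_mul, Real.mul_self_sqrt ht₁]
  have hyy : y * y = (t₂ : ℂ) := by
    rw [hy, ← Complex.ofReal_mul, Real.mul_self_sqrt ht₂]
  set v : Fin 2 → ℂ := ![x, y] with hv
  have hvstar : ∀ i, star (v i) = v i := by
    intro i; fin_cases i <;> simp [hv, hx, hy]
  have hvv : ∑ i, v i * v i = 1 := by
    rw [Fin.sum_univ_two]
    show x * x + y * y = 1
    rw [hxx, hyy, ← Complex.ofReal_add, hsum, Complex.ofReal_one]
  set B : Matrix (Fin 2) (Fin 2) ℂ := Matrix.of (fun i j => v i * v j) with hBdef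
  have hBapp : ∀ i j, B i j = v i * v j := fun i j => rfl
  have hBB : B * B = B := by
    ext i j
    rw [Matrix.mul_apply]
    calc ∑ l, B i l * B l j = (∑ l, v l * v l) * (v i * v j) := by
          rw [Finset.sum_mul]
          exact Finset.sum_congr rfl fun l _ => by rw [hBapp, hBapp]; ring
      _ = B i j := by rw [hvv, one_mul, hBapp]
  have hBherm : Bᴴ = B := by
    ext i j
    rw [Matrix.conjTranspose_apply, hBapp, hBapp, star_mul', hvstar, hvstar]
    ring
  set lam : ℂ := t₁ • a₁ + t₂ • a₂ with hlam
  have hvvd : ∑ l, v l * v l * dd a₁ a₂ l = lam := by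
    rw [Fin.sum_univ_two]
    show x * x * a₁ + y * y * a₂ = lam
    rw [hxx, hyy, hlam, Complex.real_smul, Complex.real_smul]
  set D : Matrix (Fin 2) (Fin 2) ℂ := Matrix.diagonal (dd a₁ a₂) with hD
  have hBDB : B * D * B = lam • B := by
    ext i j
    rw [Matrix.smul_apply, Matrix.mul_apply]
    calc ∑ l, (B * D) i l * B l j
        = (∑ l, v l * v l * dd a₁ a₂ l) * (v i * v j) := by
          rw [Finset.sum_mul]
          refine Finset.sum_congr rfl fun l _ => ?_
          rw [Matrix.mul_diagonal, hBapp, hBapp]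
          ring
      _ = lam • B i j := by rw [hvvd, hBapp, smul_eq_mul]
  -- the projection
  set P' : Matrix (Fin 2 × Fin k) (Fin 2 × Fin k) ℂ := B ⊗ₖ (1 : Matrix (Fin k) (Fin k) ℂ)
    with hP'
  have hP'herm : P'ᴴ = P' := by
    ext ⟨i, p⟩ ⟨j, q⟩
    rw [Matrix.conjTranspose_apply, hP']
    show star (B j i * (1 : Matrix (Fin k) (Fin k) ℂ) q p)
      = B i j * (1 : Matrix (Fin k) (Fin k) ℂ) p q
    rw [star_mul']
    rw [show star (B j i) = B i j from by
      rw [← Matrix.conjTranspose_apply, hBherm]]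
    have h1 : star ((1 : Matrix (Fin k) (Fin k) ℂ) q p) = (1 : Matrix (Fin k) (Fin k) ℂ) p q := by
      rw [← Matrix.conjTranspose_apply, Matrix.conjTranspose_one]
    rw [h1]
  have hP'idem : P' * P' = P' := by
    rw [hP', ← Matrix.mul_kronecker_mul, hBB, one_mul]
  -- rank of P'
  set R1 : Matrix (Fin 1) (Fin 2) ℂ := Matrix.of (fun _ j => v j) with hR1
  set C1 : Matrix (Fin 2) (Fin 1) ℂ := Matrix.of (fun i _ => v i) with hC1
  have hCR : C1 * R1 = B := by
    ext i j
    rw [Matrix.mul_apply]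
    simp [hC1, hR1, hBapp]
  have hRC : R1 * C1 = 1 := by
    ext i j
    rw [Matrix.mul_apply]
    have : i = j := Subsingleton.elim i j
    subst this
    simp [hR1, hC1, Matrix.one_apply, hvv]
  have hrankP' : P'.rank = k := by
    have hle : P'.rank ≤ k := by
      have h1 : P' = (C1 ⊗ₖ (1 : Matrix (Fin k) (Fin k) ℂ))
          * (R1 ⊗ₖ (1 : Matrix (Fin k) (Fin k) ℂ)) := by
        rw [← Matrix.mul_kronecker_mul, hCR, one_mul]
      calc P'.rank ≤ (R1 ⊗ₖ (1 : Matrix (Fin k) (Fin k) ℂ)).rank := by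
            rw [h1]; exact Matrix.rank_mul_le_right _ _
        _ ≤ Fintype.card (Fin 1 × Fin k) := Matrix.rank_le_card_height _
        _ = k := by simp
    have hge : k ≤ P'.rank := by
      have h1 : (R1 ⊗ₖ (1 : Matrix (Fin k) (Fin k) ℂ)) * P'
          * (C1 ⊗ₖ (1 : Matrix (Fin k) (Fin k) ℂ))
          = (1 : Matrix (Fin 1 × Fin k) (Fin 1 × Fin k) ℂ) := by
        have h2 : R1 * (C1 * R1) * C1 = (1 : Matrix (Fin 1) (Fin 1) ℂ) := by
          rw [← Matrix.mul_assoc R1 C1 R1, hRC, Matrix.one_mul, hRC]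
        rw [hP', ← Matrix.mul_kronecker_mul, ← Matrix.mul_kronecker_mul,
          one_mul, one_mul, ← hCR, h2, Matrix.one_kronecker_one]
      calc k = Fintype.card (Fin 1 × Fin k) := by simp
        _ = (1 : Matrix (Fin 1 × Fin k) (Fin 1 × Fin k) ℂ).rank := (Matrix.rank_one).symm
        _ ≤ ((R1 ⊗ₖ (1 : Matrix (Fin k) (Fin k) ℂ)) * P').rank := by
            rw [← h1]; exact Matrix.rank_mul_le_left _ _
        _ ≤ P'.rank := Matrix.rank_mul_le_right _ _
    omega
  -- P' A' P'
  have hA' : Matrix.diagonal (fun p : Fin 2 × Fin k => dd a₁ a₂ p.1)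
      = D ⊗ₖ (1 : Matrix (Fin k) (Fin k) ℂ) := by
    rw [hD, ← Matrix.diagonal_one, Matrix.diagonal_kronecker_diagonal]
    congr 1
    ext p
    simp
  have hPAP : P' * Matrix.diagonal (fun p : Fin 2 × Fin k => dd a₁ a₂ p.1) * P'
      = lam • P' := by
    rw [hA', hP', ← Matrix.mul_kronecker_mul, ← Matrix.mul_kronecker_mul,
      one_mul, one_mul, hBDB, Matrix.smul_kronecker]
  -- transport along the equivalence
  refine ⟨P'.submatrix finProdFinEquiv.symm finProdFinEquiv.symm, ?_, ?_, ?_, ?_⟩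
  · show _ᴴ = _
    rw [Matrix.conjTranspose_submatrix, hP'herm]
  · rw [Matrix.submatrix_mul_equiv, hP'idem]
  · rw [Matrix.rank_submatrix, hrankP']
  · rw [bigA, Matrix.submatrix_mul_equiv, Matrix.submatrix_mul_equiv, hPAP]
    rfl


/-- For a line segment `P = conv{a₁, a₂}`, the smallest size of a normal
matrix whose rank-k numerical range equals `P` is `2k` when `a₁ ≠ a₂`, and `k` when
`a₁ = a₂`. -/
theorem stmt6 (k : ℕ) (hk : 1 ≤ k) (a₁ a₂ : ℂ) :
    (a₁ ≠ a₂ →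
      ((∃ A : Matrix (Fin (2 * k)) (Fin (2 * k)) ℂ, A * Aᴴ = Aᴴ * A ∧
          rankNumRange (2 * k) k A = segment ℝ a₁ a₂) ∧
        ∀ n : ℕ, n < 2 * k → ∀ A : Matrix (Fin n) (Fin n) ℂ, A * Aᴴ = Aᴴ * A →
          rankNumRange n k A ≠ segment ℝ a₁ a₂)) ∧
    (a₁ = a₂ →
      ((∃ A : Matrix (Fin k) (Fin k) ℂ, A * Aᴴ = Aᴴ * A ∧
          rankNumRange k k A = {a₁}) ∧
        ∀ n : ℕ, n < k → ∀ A : Matrix (Fin n) (Fin n) ℂ, A * Aᴴ = Aᴴ * A →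
          rankNumRange n k A ≠ {a₁})) := by
  constructor
  · intro hne
    constructor
    · refine ⟨bigA k a₁ a₂, bigA_normal k a₁ a₂, ?_⟩
      apply Set.Subset.antisymm
      · rw [bigA_eq_diagonal]
        apply diag_subset_segment hk
        intro i
        have h2 : ∀ q : Fin 2, dd a₁ a₂ q = a₁ ∨ dd a₁ a₂ q = a₂ := by
          intro q; fin_cases q <;> simp [dd]
        exact h2 _
      · intro lam hlam
        exact mem_rankNumRange_bigA k a₁ a₂ hk hlam
    · intro n hn A _ heq
      have hsub : segment ℝ a₁ a₂ ⊆ spectrum ℂ A := by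
        rw [← heq]
        exact fun lam hl => mem_spectrum_of_mem_rankNumRange hn A hl
      exact (seg_infinite hne) ((Matrix.finite_spectrum A).subset hsub)
  · intro haa
    constructor
    · refine ⟨(a₁ : ℂ) • 1, ?_, ?_⟩
      · have hmul : ∀ u w : ℂ, (u • (1 : Matrix (Fin k) (Fin k) ℂ)) * (w • 1)
            = (u * w) • 1 := by
          intro u w
          rw [smul_mul_assoc, Matrix.one_mul, smul_smul]
        rw [Matrix.conjTranspose_smul, Matrix.conjTranspose_one, hmul, hmul, mul_comm]
      · ext lam
        simp only [Set.mem_singleton_iff]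
        constructor
        · rintro ⟨P, h1, h2, h3, h4⟩
          have h5 : P * ((a₁ : ℂ) • 1) * P = a₁ • P := by
            rw [mul_smul_comm, Matrix.mul_one, smul_mul_assoc, h2]
          rw [h5] at h4
          have hP0 : P ≠ 0 := by
            intro h0
            rw [h0, Matrix.rank_zero] at h3
            omega
          by_contra hcon
          apply hP0
          have h6 : (a₁ - lam) • P = 0 := by
            rw [sub_smul, h4, sub_self]
          rcases smul_eq_zero.mp h6 with h | h
          · exact absurd (sub_eq_zero.mp h).symm hcon
          · exact h
        · rintro rfl
          refine ⟨1, Matrix.isHermitian_one, by rw [Matrix.one_mul], ?_, ?_⟩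
          · rw [Matrix.rank_one, Fintype.card_fin]
          · rw [Matrix.one_mul, Matrix.mul_one]
    · intro n hn A _ heq
      have hmem : a₁ ∈ rankNumRange n k A := by
        rw [heq]; rfl
      obtain ⟨P, _, _, h3, _⟩ := hmem
      have := Matrix.rank_le_card_width P
      rw [Fintype.card_fin] at this
      omega
end Construction
end
end

section
/- Let k > 1 and let Π be a p-element subset of the unit circle Ω containing exactly s pairs of antipodal points, where p ≥ 3 and s ≥ 0. Suppose Π is 1-regular but not k-regular and k ≥ p − s. Then one can extend Π to a k-regular set by adding finitely many points of Ω \ Π: if s = 0 there is a (2k+1−p)-element set Π' ⊆ Ω \ Π with Π ∪ Π' k-regular, and if s > 0 there is a (2k+2−p)-element set Π' ⊆ Ω \ Π with Π ∪ Π' k-regular. -/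
open scoped Classical
open Matrix

noncomputable section

open Real Set

namespace S14

def expI (x : ℝ) : ℂ := Complex.exp (x * Complex.I)

lemma abs_expI (x : ℝ) : ‖expI x‖ = 1 := Complex.norm_exp_ofReal_mul_I x

lemma expI_add (x y : ℝ) : expI (x + y) = expI x * expI y := by
  rw [expI, expI, expI, ← Complex.exp_add]; push_cast; ring_nf

lemma expI_eq_iff {x y : ℝ} : expI x = expI y ↔ ∃ n : ℤ, x = y + n * (2 * π) := by
  rw [expI, expI, Complex.exp_eq_exp_iff_exists_int]
  constructor
  · rintro ⟨n, hn⟩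
    have h2 := congrArg Complex.im hn
    push_cast at h2
    simp [Complex.mul_im, Complex.add_im, Complex.mul_re] at h2
    exact ⟨n, by linarith⟩
  · rintro ⟨n, hn⟩
    refine ⟨n, ?_⟩
    rw [hn]; push_cast; ring

lemma expI_neg (x : ℝ) : -expI x = expI (x + π) := by
  rw [expI_add]
  have : expI π = -1 := by rw [expI]; exact_mod_cast Complex.exp_pi_mul_I
  rw [this]; ring

def D (x : ℝ) : ℝ := toIocMod Real.two_pi_pos 0 x

lemma D_mem (x : ℝ) : D x ∈ Ioc 0 (2 * π) := by
  have := toIocMod_mem_Ioc Real.two_pi_pos 0 x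
  simpa [D] using this

lemma D_spec (x : ℝ) : ∃ n : ℤ, x = D x + n * (2 * π) := by
  refine ⟨toIocDiv Real.two_pi_pos 0 x, ?_⟩
  have := toIocMod_add_toIocDiv_zsmul Real.two_pi_pos 0 x
  rw [D]
  push_cast [zsmul_eq_mul] at this ⊢
  linarith [this]

lemma D_eq {x y : ℝ} (hy : y ∈ Ioc 0 (2 * π)) (h : ∃ n : ℤ, x = y + n * (2 * π)) :
    D x = y := by
  rw [D, toIocMod_eq_iff]
  refine ⟨by simpa using hy, ?_⟩
  rcases h with ⟨n, hn⟩
  exact ⟨n, by push_cast [zsmul_eq_mul]; linarith⟩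

lemma mem_arc {x b : ℝ} : expI x ∈ openSemicircle (expI b) ↔ D (x - b) ∈ Ioo 0 π := by
  constructor
  · rintro ⟨t, ht0, htp, hz⟩
    have hz' : expI x = expI (t + b) := by rw [expI_add]; exact hz
    rcases expI_eq_iff.1 hz' with ⟨n, hn⟩
    have hD : D (x - b) = t := by
      apply D_eq ⟨ht0, by linarith [pi_pos]⟩
      exact ⟨n, by linarith⟩
    rw [hD]; exact ⟨ht0, htp⟩
  · intro hd
    refine ⟨D (x - b), hd.1, hd.2, ?_⟩
    rcases D_spec (x - b) with ⟨n, hn⟩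
    have h : expI x = expI (D (x - b) + b) := expI_eq_iff.2 ⟨n, by linarith⟩
    rw [h, expI_add]
    rfl

lemma unit_eq_expI {z : ℂ} (hz : ‖z‖ = 1) : z = expI (Complex.arg z) := by
  have := Complex.norm_mul_exp_arg_mul_I z
  rw [hz] at this
  simpa [expI] using this.symm

end S14

noncomputable section
namespace S14

lemma arc_xor_neg {z β : ℂ} (hz : ‖z‖ = 1) (hβ : ‖β‖ = 1)
    (h1 : z ≠ β) (h2 : z ≠ -β) : (z ∈ openSemicircle β ↔ -z ∉ openSemicircle β) := by
  set x := Complex.arg z with hx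
  set b := Complex.arg β with hb
  have hze : z = expI x := unit_eq_expI hz
  have hβe : β = expI b := unit_eq_expI hβ
  set d := D (x - b) with hd
  have hdm := D_mem (x - b)
  have hd2 : d ≠ 2 * π := by
    intro h
    apply h1
    rw [hze, hβe, expI_eq_iff]
    rcases D_spec (x - b) with ⟨n, hn⟩
    exact ⟨n + 1, by rw [← hd, h] at hn; push_cast; linarith⟩
  have hdpi : d ≠ π := by
    intro h
    apply h2
    rw [hze, hβe, expI_neg, expI_eq_iff]
    rcases D_spec (x - b) with ⟨n, hn⟩
    exact ⟨n, by rw [← hd, h] at hn; linarith⟩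
  have hmem : z ∈ openSemicircle β ↔ d ∈ Ioo 0 π := by
    rw [hze, hβe, mem_arc]
  have hmemn : -z ∈ openSemicircle β ↔ D (x + π - b) ∈ Ioo 0 π := by
    rw [hze, hβe, expI_neg, mem_arc]
  rcases D_spec (x - b) with ⟨n, hn⟩
  rcases lt_or_gt_of_ne hdpi with hlt | hgt
  · -- d < π : z ∈ arc, -z ∉ arc
    have hD' : D (x + π - b) = d + π :=
      D_eq ⟨by linarith [hdm.1], by linarith⟩ ⟨n, by linarith⟩
    rw [hmem, hmemn, hD']
    constructor
    · intro _ hc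
      exact absurd hc.2 (by linarith [hdm.1])
    · intro _
      exact ⟨hdm.1, hlt⟩
  · -- d > π : z ∉ arc, -z ∈ arc
    have hD' : D (x + π - b) = d - π :=
      D_eq ⟨by linarith, by linarith [hdm.2, pi_pos]⟩ ⟨n + 1, by push_cast; linarith⟩
    rw [hmem, hmemn, hD']
    constructor
    · intro hc; exact absurd hc.2 (by linarith)
    · intro h
      exfalso
      exact h ⟨by linarith, by rcases lt_or_eq_of_le hdm.2 with h' | h'; · linarith
                               · exact absurd h' hd2⟩
  
lemma even_regular {k : ℕ} (S : Finset ℂ) (hunit : ∀ z ∈ S, ‖z‖ = 1)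
    (hsym : ∀ z ∈ S, -z ∈ S) (hcard : S.card = 2 * k + 2) : IsKRegular k ↑S := by
  intro β hβ
  set T := (S.erase β).erase (-β) with hT
  have hcardT : 2 * k ≤ T.card := by
    have h1 := Finset.pred_card_le_card_erase (s := S.erase β) (a := -β)
    have h2 := Finset.pred_card_le_card_erase (s := S) (a := β)
    rw [hT]
    omega
  set A := T.filter (fun z => z ∈ openSemicircle β) with hA
  have hTmem : ∀ z ∈ T, z ∈ S ∧ z ≠ β ∧ z ≠ -β := by
    intro z hzT
    rw [hT] at hzT
    have h1 := Finset.mem_of_mem_erase hzT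
    exact ⟨Finset.mem_of_mem_erase h1, Finset.ne_of_mem_erase h1, Finset.ne_of_mem_erase hzT⟩
  have hTneg : ∀ z ∈ T, -z ∈ T := by
    intro z hzT
    obtain ⟨hzS, hz1, hz2⟩ := hTmem z hzT
    rw [hT]
    refine Finset.mem_erase.2 ⟨?_, Finset.mem_erase.2 ⟨?_, hsym z hzS⟩⟩
    · intro h; exact hz1 (by rw [← neg_neg z, h, neg_neg])
    · intro h; exact hz2 (by rw [← neg_neg z, h])
  have hbij : A.card = (T \ A).card := by
    apply Finset.card_bij (fun z _ => -z)
    · intro z hzA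
      have hzT := Finset.mem_of_mem_filter z hzA
      obtain ⟨hzS, hz1, hz2⟩ := hTmem z hzT
      have harc := (Finset.mem_filter.1 hzA).2
      rw [Finset.mem_sdiff]
      refine ⟨hTneg z hzT, ?_⟩
      intro hc
      have := (Finset.mem_filter.1 hc).2
      exact ((arc_xor_neg (hunit z hzS) hβ hz1 hz2).1 harc) this
    · intro a ha b hb h
      exact neg_injective h
    · intro y hy
      rw [Finset.mem_sdiff] at hy
      obtain ⟨hyT, hyA⟩ := hy
      obtain ⟨hyS, hy1, hy2⟩ := hTmem y hyT
      have hyarc : y ∉ openSemicircle β := by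
        intro hc
        exact hyA (Finset.mem_filter.2 ⟨hyT, hc⟩)
      have : -y ∈ openSemicircle β := by
        by_contra hc
        exact hyarc ((arc_xor_neg (hunit y hyS) hβ hy1 hy2).2 hc)
      exact ⟨-y, Finset.mem_filter.2 ⟨hTneg y hyT, this⟩, by rw [neg_neg]⟩
  have hAT : A ⊆ T := Finset.filter_subset _ _
  have hcardA : k ≤ A.card := by
    have := Finset.card_sdiff_add_card_eq_card hAT
    omega
  have hsub : (↑A : Set ℂ) ⊆ ↑S ∩ openSemicircle β := by
    intro z hz
    have hz' := Finset.mem_coe.1 hz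
    exact ⟨Finset.mem_coe.2 ((hTmem z (Finset.mem_of_mem_filter z hz')).1),
      (Finset.mem_filter.1 hz').2⟩
  calc k ≤ A.card := hcardA
    _ = (↑A : Set ℂ).ncard := (Set.ncard_coe_finset A).symm
    _ ≤ (↑S ∩ openSemicircle β).ncard :=
        Set.ncard_le_ncard hsub (S.finite_toSet.inter_of_left _)

end S14


namespace S14
open Real Set

lemma int_abs_lt_one {a : ℤ} (h : |(a : ℝ)| < 1) : a = 0 := by
  have h1 : |a| < 1 := by exact_mod_cast (by push_cast; exact h : ((|a| : ℤ) : ℝ) < 1)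
  rcases abs_lt.1 h1 with ⟨h2, h3⟩
  omega

lemma expI_inj {x y : ℝ} (h : |x - y| < 2 * π) (he : expI x = expI y) : x = y := by
  rcases expI_eq_iff.1 he with ⟨n, hn⟩
  have hn' : x - y = n * (2 * π) := by linarith
  rw [hn'] at h
  have h2 : |(n : ℝ)| * (2 * π) < 2 * π := by
    rw [abs_mul, abs_of_pos Real.two_pi_pos] at h
    linarith
  have h3 : |(n : ℝ)| < 1 := by
    have p2 := Real.two_pi_pos
    nlinarith
  have h4 : n = 0 := int_abs_lt_one h3
  rw [h4] at hn'
  push_cast at hn'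
  linarith

set_option maxHeartbeats 3200000 in
lemma odd_regular {k : ℕ} (hk2 : 2 ≤ k) (Φ : Finset ℂ)
    (hΦ : ∀ z ∈ Φ, ‖z‖ = 1) (hpk : Φ.card ≤ k)
    (hnoneg : ∀ α ∈ Φ, -α ∉ Φ) :
    ∃ S : Finset ℂ, Φ ⊆ S ∧ S.card = 2 * k + 1 ∧ (∀ z ∈ S, ‖z‖ = 1) ∧
      IsKRegular k ↑S := by
  classical
  have hπ := Real.pi_pos
  have hπ3 := Real.pi_gt_three
  -- choose γ
  obtain ⟨Φn, hΦn⟩ : ∃ x : Finset ℂ, x = Φ ∪ Φ.image (fun z => -z) := ⟨_, rfl⟩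
  have hbadfin : {t | t ∈ Ioo (0:ℝ) 1 ∧ expI t ∈ (↑Φn : Set ℂ)}.Finite := by
    apply Set.Finite.of_finite_image (f := expI)
    · apply Φn.finite_toSet.subset
      rintro y ⟨t, ⟨_, ht⟩, rfl⟩; exact ht
    · intro a ha a' ha' hee
      have h1 := ha.1; have h2 := ha'.1
      simp only [Set.mem_Ioo] at h1 h2
      refine expI_inj ?_ hee
      rw [abs_sub_lt_iff]
      constructor <;> linarith
  obtain ⟨γ, hγIoo, hγbad⟩ :
      ∃ γ, γ ∈ Ioo (0:ℝ) 1 ∧ ¬ (γ ∈ Ioo (0:ℝ) 1 ∧ expI γ ∈ (↑Φn : Set ℂ)) := by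
    obtain ⟨γ, hγ⟩ := ((Set.Ioo_infinite (by norm_num : (0:ℝ) < 1)).diff hbadfin).nonempty
    exact ⟨γ, hγ.1, hγ.2⟩
  have hγΦn : expI γ ∉ (↑Φn : Set ℂ) := fun hc => hγbad ⟨hγIoo, hc⟩
  have hγΦ : ∀ α ∈ Φ, expI γ ≠ α := by
    intro α hα h
    exact hγΦn (by rw [hΦn, h]; exact Finset.mem_coe.2 (Finset.mem_union_left _ hα))
  have hγΦ' : ∀ α ∈ Φ, expI γ ≠ -α := by
    intro α hα h
    apply hγΦn
    rw [hΦn, h]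
    refine Finset.mem_coe.2 (Finset.mem_union_right _ ?_)
    exact Finset.mem_image.2 ⟨α, hα, rfl⟩
  -- ρ and r
  obtain ⟨ρ, hρdef⟩ : ∃ x : ℂ → ℝ, x = fun α => D (Complex.arg α - γ) := ⟨_, rfl⟩
  obtain ⟨r, hrdef⟩ : ∃ x : ℂ → ℝ, x = fun α => if ρ α < π then ρ α else ρ α - π := ⟨_, rfl⟩
  have hαrep : ∀ α ∈ Φ, α = expI (γ + ρ α) := by
    intro α hα
    rcases D_spec (Complex.arg α - γ) with ⟨n, hn⟩
    have h1 : expI (Complex.arg α) = expI (γ + ρ α) := by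
      refine expI_eq_iff.2 ⟨n, ?_⟩
      rw [hρdef]
      show Complex.arg α = γ + D (Complex.arg α - γ) + n * (2 * π)
      linarith
    rw [← h1]
    exact unit_eq_expI (hΦ α hα)
  have hρmem : ∀ α ∈ Φ, ρ α ∈ Ioc 0 (2*π) := by
    intro α _
    rw [hρdef]
    exact D_mem _
  have hρ2π : ∀ α ∈ Φ, ρ α < 2*π := by
    intro α hα
    rcases lt_or_eq_of_le (hρmem α hα).2 with h | h
    · exact h
    · exfalso
      apply hγΦ α hα
      have h2 : expI γ = expI (γ + ρ α) := by
        refine expI_eq_iff.2 ⟨-1, ?_⟩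
        rw [h]; push_cast; ring
      rw [h2]
      exact (hαrep α hα).symm
  have hρπ : ∀ α ∈ Φ, ρ α ≠ π := by
    intro α hα h
    apply hγΦ' α hα
    have h1 : α = - expI γ := by
      rw [hαrep α hα, h, ← expI_neg]
    rw [h1, neg_neg]
  have hr_mem : ∀ α ∈ Φ, r α ∈ Ioo 0 π := by
    intro α hα
    have hm := hρmem α hα
    have h2 := hρ2π α hα
    have h3 := hρπ α hα
    rw [hrdef]
    simp only
    split
    · exact ⟨hm.1, by assumption⟩
    · rename_i h
      push_neg at h
      refine ⟨?_, by linarith⟩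
      rcases lt_or_eq_of_le h with h' | h'
      · linarith
      · exact absurd h'.symm h3
  have hr_rep : ∀ α ∈ Φ, (ρ α < π ∧ α = expI (γ + r α)) ∨
      (π < ρ α ∧ α = expI (γ + r α + π)) := by
    intro α hα
    rcases lt_trichotomy (ρ α) π with h | h | h
    · left
      refine ⟨h, ?_⟩
      have he : r α = ρ α := by rw [hrdef]; simp only; rw [if_pos h]
      rw [he]; exact hαrep α hα
    · exact absurd h (hρπ α hα)
    · right
      refine ⟨h, ?_⟩
      have he : r α = ρ α - π := by rw [hrdef]; simp only; rw [if_neg (by linarith)]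
      rw [he]
      have he2 : γ + (ρ α - π) + π = γ + ρ α := by ring
      rw [he2]; exact hαrep α hα
  have hr_inj : Set.InjOn r ↑Φ := by
    intro α hα0 α' hα0' h
    have hα := Finset.mem_coe.1 hα0
    have hα' := Finset.mem_coe.1 hα0'
    rcases hr_rep α hα with ⟨h1, e1⟩ | ⟨h1, e1⟩ <;>
      rcases hr_rep α' hα' with ⟨h2, e2⟩ | ⟨h2, e2⟩
    · rw [e1, e2, h]
    · exfalso
      have hcon : α' = -α := by
        rw [e2, e1, ← h, ← expI_neg]
      exact hnoneg α hα (by rw [← hcon]; exact hα')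
    · exfalso
      have hcon : α = -α' := by
        rw [e1, e2, h, ← expI_neg]
      exact hnoneg α' hα' (by rw [← hcon]; exact hα)
    · rw [e1, e2, h]
  -- the anchor set
  obtain ⟨NΦ, hNΦ⟩ : ∃ x : Finset ℝ, x = Φ.image r := ⟨_, rfl⟩
  have hNΦcard : NΦ.card = Φ.card := by rw [hNΦ]; exact Finset.card_image_of_injOn hr_inj
  have hNΦmem : ∀ n ∈ NΦ, n ∈ Ioo 0 π := by
    intro n hn
    rw [hNΦ] at hn
    rcases Finset.mem_image.1 hn with ⟨α, hα, rfl⟩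
    exact hr_mem α hα
  obtain ⟨T0, hT0sub, hT0card⟩ :=
    ((Set.Ioo_infinite hπ).diff NΦ.finite_toSet).exists_subset_card_eq (k - Φ.card)
  obtain ⟨FullN, hFullN⟩ : ∃ x : Finset ℝ, x = NΦ ∪ T0 := ⟨_, rfl⟩
  have hdisj : Disjoint NΦ T0 := by
    rw [Finset.disjoint_right]
    intro a ha hc
    exact (hT0sub ha).2 (Finset.mem_coe.2 hc)
  have hNF : NΦ ⊆ FullN := by rw [hFullN]; exact Finset.subset_union_left
  have hFullcard : FullN.card = k := by
    rw [hFullN, Finset.card_union_of_disjoint hdisj, hNΦcard, hT0card]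
    omega
  have hFmem : ∀ n ∈ FullN, n ∈ Ioo 0 π := by
    intro n hn
    rw [hFullN] at hn
    rcases Finset.mem_union.1 hn with h | h
    · exact hNΦmem n h
    · exact (hT0sub h).1
  have hne : FullN.Nonempty := Finset.card_pos.1 (by omega)
  -- margins
  obtain ⟨δ₁, hδ₁⟩ : ∃ x : ℝ, x = FullN.min' hne := ⟨_, rfl⟩
  have hδ₁le : ∀ n ∈ FullN, δ₁ ≤ n := by intro n hn; rw [hδ₁]; exact Finset.min'_le _ _ hn
  have hδ₁pos : 0 < δ₁ := by rw [hδ₁]; exact (hFmem _ (FullN.min'_mem hne)).1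
  obtain ⟨mx, hmx⟩ : ∃ x : ℝ, x = FullN.max' hne := ⟨_, rfl⟩
  have hmxge : ∀ n ∈ FullN, n ≤ mx := by intro n hn; rw [hmx]; exact Finset.le_max' _ _ hn
  have hmxlt : mx < π := by rw [hmx]; exact (hFmem _ (FullN.max'_mem hne)).2
  have hδ₁π : δ₁ < π := lt_of_le_of_lt (hδ₁le _ (FullN.max'_mem hne) |>.trans (hmxge _ (FullN.max'_mem hne))) hmxlt
  obtain ⟨δ₂, hδ₂⟩ : ∃ x : ℝ, x = π - mx := ⟨_, rfl⟩
  have hδ₂pos : 0 < δ₂ := by rw [hδ₂]; linarith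
  have hub : ∀ n ∈ FullN, n ≤ π - δ₂ := by intro n hn; rw [hδ₂]; linarith [hmxge n hn]
  -- minimum gap
  obtain ⟨G, hG⟩ : ∃ x : Finset ℝ, x = FullN.offDiag.image (fun q => |q.1 - q.2|) := ⟨_, rfl⟩
  have hGne : G.Nonempty := by
    obtain ⟨a, ha, b, hb, hab⟩ := Finset.one_lt_card.1 (by omega : 1 < FullN.card)
    exact ⟨|a - b|, by rw [hG]; exact Finset.mem_image.2 ⟨(a, b), Finset.mem_offDiag.2 ⟨ha, hb, hab⟩, rfl⟩⟩
  obtain ⟨gmin, hgmin⟩ : ∃ x : ℝ, x = G.min' hGne := ⟨_, rfl⟩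
  have hgpos : 0 < gmin := by
    have hmm := G.min'_mem hGne
    rw [← hgmin, hG] at hmm
    rcases Finset.mem_image.1 hmm with ⟨q, hq, hval⟩
    have hne' := (Finset.mem_offDiag.1 hq).2.2
    rw [← hval]
    exact abs_pos.2 (sub_ne_zero.2 hne')
  have hgle : ∀ n ∈ FullN, ∀ m ∈ FullN, n ≠ m → gmin ≤ |n - m| := by
    intro n hn m hm hnm
    rw [hgmin]
    refine Finset.min'_le _ _ ?_
    rw [hG]
    exact Finset.mem_image.2 ⟨(n, m), Finset.mem_offDiag.2 ⟨hn, hm, hnm⟩, rfl⟩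
  -- epsilon
  obtain ⟨ε, hε⟩ : ∃ x : ℝ, x = min δ₁ (min δ₂ gmin) / 8 := ⟨_, rfl⟩
  have hεpos : 0 < ε := by
    rw [hε]
    have hm : 0 < min δ₁ (min δ₂ gmin) := lt_min hδ₁pos (lt_min hδ₂pos hgpos)
    linarith
  have hεδ₁ : 8 * ε ≤ δ₁ := by rw [hε]; have := min_le_left δ₁ (min δ₂ gmin); linarith
  have hεδ₂ : 8 * ε ≤ δ₂ := by
    rw [hε]
    have h1 := min_le_right δ₁ (min δ₂ gmin)
    have h2 := min_le_left δ₂ gmin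
    linarith
  have hεg : 8 * ε ≤ gmin := by
    rw [hε]
    have h1 := min_le_right δ₁ (min δ₂ gmin)
    have h2 := min_le_right δ₂ gmin
    linarith
  have hεπ : ε < π := by linarith
  -- anchors
  obtain ⟨ζ, hζdef⟩ : ∃ x : ℝ → ℝ,
      x = fun n => if ∃ α ∈ Φ, π < ρ α ∧ r α = n then n - ε else n := ⟨_, rfl⟩
  have hζcases : ∀ n : ℝ, ζ n = n - ε ∨ ζ n = n := by
    intro n
    rw [hζdef]
    simp only
    split
    · exact Or.inl rfl
    · exact Or.inr rfl
  have hζlb : ∀ n ∈ FullN, δ₁ - ε ≤ ζ n := by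
    intro n hn
    have h := hδ₁le n hn
    rcases hζcases n with h1 | h1 <;> rw [h1] <;> linarith
  have hζub : ∀ n ∈ FullN, ζ n ≤ π - δ₂ := by
    intro n hn
    have h := hub n hn
    rcases hζcases n with h1 | h1 <;> rw [h1] <;> linarith
  have hζpos : ∀ n ∈ FullN, 0 < ζ n := by
    intro n hn
    have := hζlb n hn
    linarith
  have hζπ : ∀ n ∈ FullN, ζ n < π := by
    intro n hn
    have := hζub n hn
    linarith
  have hζsep : ∀ n ∈ FullN, ∀ m ∈ FullN, n ≠ m → 7 * ε ≤ |ζ n - ζ m| := by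
    intro n hn m hm hnm
    have hg := hgle n hn m hm hnm
    have hc : |(n - m) - (ζ n - ζ m)| ≤ ε := by
      rcases hζcases n with h1 | h1 <;> rcases hζcases m with h2 | h2 <;> rw [h1, h2] <;>
        rw [abs_le] <;> constructor <;> · ring_nf; linarith
    have htri := abs_sub_abs_le_abs_sub (n - m) ((n - m) - (ζ n - ζ m))
    have he : (n - m) - ((n - m) - (ζ n - ζ m)) = ζ n - ζ m := by ring
    rw [he] at htri
    linarith
  have hζinj : ∀ n ∈ FullN, ∀ m ∈ FullN, ζ n = ζ m → n = m := by
    intro n hn m hm h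
    by_contra hnm
    have h2 := hζsep n hn m hm hnm
    rw [h] at h2
    simp at h2
    linarith
  -- the points
  obtain ⟨u, hudef⟩ : ∃ x : ℝ → ℂ, x = fun n => expI (γ + ζ n) := ⟨_, rfl⟩
  obtain ⟨v, hvdef⟩ : ∃ x : ℝ → ℂ, x = fun n => expI (γ + ζ n + π + ε) := ⟨_, rfl⟩
  obtain ⟨w, hwdef⟩ : ∃ x : ℂ, x = expI (γ + π - δ₂ / 2) := ⟨_, rfl⟩
  obtain ⟨S, hSdef⟩ : ∃ x : Finset ℂ, x = (FullN.image u ∪ FullN.image v) ∪ {w} := ⟨_, rfl⟩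
  have huval : ∀ n, u n = expI (γ + ζ n) := by intro n; rw [hudef]
  have hvval : ∀ n, v n = expI (γ + ζ n + π + ε) := by intro n; rw [hvdef]
  have hu_inj : Set.InjOn u ↑FullN := by
    intro n hn0 m hm0 h
    have hn := Finset.mem_coe.1 hn0
    have hm := Finset.mem_coe.1 hm0
    rw [huval, huval] at h
    have hb : |(γ + ζ n) - (γ + ζ m)| < 2 * π := by
      have h1 := hζπ n hn; have h2 := hζpos n hn
      have h3 := hζπ m hm; have h4 := hζpos m hm
      rw [abs_sub_lt_iff]; constructor <;> linarith
    have h2 := expI_inj hb h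
    exact hζinj n hn m hm (by linarith)
  have hv_inj : Set.InjOn v ↑FullN := by
    intro n hn0 m hm0 h
    have hn := Finset.mem_coe.1 hn0
    have hm := Finset.mem_coe.1 hm0
    rw [hvval, hvval] at h
    have hb : |(γ + ζ n + π + ε) - (γ + ζ m + π + ε)| < 2 * π := by
      have h1 := hζπ n hn; have h2 := hζpos n hn
      have h3 := hζπ m hm; have h4 := hζpos m hm
      rw [abs_sub_lt_iff]; constructor <;> linarith
    have h2 := expI_inj hb h
    exact hζinj n hn m hm (by linarith)
  have huv : ∀ n ∈ FullN, ∀ m ∈ FullN, u n ≠ v m := by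
    intro n hn m hm h
    rw [huval, hvval] at h
    have h1 := hζπ n hn; have h2 := hζpos n hn
    have h3 := hζπ m hm; have h4 := hζpos m hm
    have h5 := hζub m hm
    have hb : |(γ + ζ n) - (γ + ζ m + π + ε)| < 2 * π := by
      rw [abs_sub_lt_iff]; constructor <;> linarith
    have h6 := expI_inj hb h
    linarith
  have hwu : ∀ n ∈ FullN, w ≠ u n := by
    intro n hn h
    rw [hwdef, huval] at h
    have h1 := hζπ n hn; have h2 := hζpos n hn
    have h5 := hζub n hn
    have hb : |(γ + π - δ₂ / 2) - (γ + ζ n)| < 2 * π := by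
      rw [abs_sub_lt_iff]; constructor <;> linarith
    have h6 := expI_inj hb h
    linarith
  have hwv : ∀ n ∈ FullN, w ≠ v n := by
    intro n hn h
    rw [hwdef, hvval] at h
    have h1 := hζπ n hn; have h2 := hζpos n hn
    have h5 := hζub n hn
    have hb : |(γ + π - δ₂ / 2) - (γ + ζ n + π + ε)| < 2 * π := by
      rw [abs_sub_lt_iff]; constructor <;> linarith
    have h6 := expI_inj hb h
    linarith
  have huS : ∀ n ∈ FullN, u n ∈ S := by
    intro n hn
    rw [hSdef]
    exact Finset.mem_union_left _ (Finset.mem_union_left _ (Finset.mem_image.2 ⟨n, hn, rfl⟩))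
  have hvS : ∀ n ∈ FullN, v n ∈ S := by
    intro n hn
    rw [hSdef]
    exact Finset.mem_union_left _ (Finset.mem_union_right _ (Finset.mem_image.2 ⟨n, hn, rfl⟩))
  have hwS : w ∈ S := by rw [hSdef]; exact Finset.mem_union_right _ (Finset.mem_singleton_self w)
  -- Φ is contained in S
  have hΦS : Φ ⊆ S := by
    intro α hα
    have hrα : r α ∈ FullN := hNF (by rw [hNΦ]; exact Finset.mem_image.2 ⟨α, hα, rfl⟩)
    rcases hr_rep α hα with ⟨h1, e1⟩ | ⟨h1, e1⟩
    · have hζeq : ζ (r α) = r α := by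
        rw [hζdef]
        simp only
        rw [if_neg]
        rintro ⟨α', hα', hπα', hrr⟩
        have heq := hr_inj (Finset.mem_coe.2 hα') (Finset.mem_coe.2 hα) hrr
        rw [heq] at hπα'
        linarith
      have he : α = u (r α) := by rw [huval, hζeq]; exact e1
      rw [he]; exact huS _ hrα
    · have hζeq : ζ (r α) = r α - ε := by
        rw [hζdef]
        simp only
        rw [if_pos ⟨α, hα, h1, rfl⟩]
      have he : α = v (r α) := by
        rw [hvval, hζeq]
        have he2 : γ + (r α - ε) + π + ε = γ + r α + π := by ring
        rw [he2]
        exact e1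
      rw [he]; exact hvS _ hrα
  -- cardinality
  have hcardIu : (FullN.image u).card = k := by
    rw [Finset.card_image_of_injOn hu_inj, hFullcard]
  have hcardIv : (FullN.image v).card = k := by
    rw [Finset.card_image_of_injOn hv_inj, hFullcard]
  have hdisj_uv : Disjoint (FullN.image u) (FullN.image v) := by
    rw [Finset.disjoint_left]
    rintro z hz1 hz2
    rcases Finset.mem_image.1 hz1 with ⟨n, hn, rfl⟩
    rcases Finset.mem_image.1 hz2 with ⟨m, hm, he⟩
    exact huv n hn m hm he.symm
  have hw_not : w ∉ FullN.image u ∪ FullN.image v := by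
    intro hc
    rcases Finset.mem_union.1 hc with h | h
    · rcases Finset.mem_image.1 h with ⟨n, hn, he⟩
      exact hwu n hn he.symm
    · rcases Finset.mem_image.1 h with ⟨n, hn, he⟩
      exact hwv n hn he.symm
  have hScard : S.card = 2 * k + 1 := by
    rw [hSdef, Finset.card_union_of_disjoint (Finset.disjoint_singleton_right.2 hw_not),
      Finset.card_union_of_disjoint hdisj_uv, hcardIu, hcardIv, Finset.card_singleton]
    ring
  have hSunit : ∀ z ∈ S, ‖z‖ = 1 := by
    intro z hz
    rw [hSdef] at hz
    rcases Finset.mem_union.1 hz with h | h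
    · rcases Finset.mem_union.1 h with h' | h'
      · rcases Finset.mem_image.1 h' with ⟨n, _, rfl⟩
        rw [huval]; exact abs_expI _
      · rcases Finset.mem_image.1 h' with ⟨n, _, rfl⟩
        rw [hvval]; exact abs_expI _
    · rw [Finset.mem_singleton.1 h, hwdef]
      exact abs_expI _
  -- regularity
  refine ⟨S, hΦS, hScard, hSunit, ?_⟩
  intro β hβ
  obtain ⟨b, hbdef⟩ : ∃ x : ℝ, x = Complex.arg β := ⟨_, rfl⟩
  have hβe : β = expI b := by rw [hbdef]; exact unit_eq_expI hβ
  obtain ⟨d, hddef⟩ : ∃ x : ℝ → ℝ, x = fun n => D (γ + ζ n - b) := ⟨_, rfl⟩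
  have hdval : ∀ n, d n = D (γ + ζ n - b) := by intro n; rw [hddef]
  have hdmem : ∀ n : ℝ, d n ∈ Ioc 0 (2*π) := by intro n; rw [hdval]; exact D_mem _
  have harc : ∀ x : ℝ, D (x - b) ∈ Ioo 0 π → expI x ∈ openSemicircle β := by
    intro x hx
    rw [hβe]
    exact mem_arc.2 hx
  have hu_arc : ∀ n ∈ FullN, d n < π → u n ∈ openSemicircle β := by
    intro n hn h
    rw [hdval] at h
    rw [huval]
    exact harc _ ⟨(D_mem (γ + ζ n - b)).1, h⟩
  have hv_arc : ∀ n ∈ FullN, π ≤ d n → d n < 2*π - ε → v n ∈ openSemicircle β := by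
    intro n hn h1 h2
    rw [hdval] at h1 h2
    have hdn := D_mem (γ + ζ n - b)
    have hdn1 := hdn.1
    have hdn2 := hdn.2
    rw [hvval]
    apply harc
    have hDv : D (γ + ζ n + π + ε - b) = D (γ + ζ n - b) + π + ε - 2*π := by
      apply D_eq ⟨by linarith, by linarith⟩
      rcases D_spec (γ + ζ n - b) with ⟨a, ha⟩
      refine ⟨a + 1, ?_⟩
      push_cast
      linarith
    rw [hDv]
    exact ⟨by linarith, by linarith⟩
  have hw_arc : ∀ n ∈ FullN, 2*π - ε ≤ d n → w ∈ openSemicircle β := by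
    intro n hn h
    rw [hdval] at h
    have hdn := D_mem (γ + ζ n - b)
    have hdn1 := hdn.1
    have hdn2 := hdn.2
    have hz1 := hζlb n hn
    have hz2 := hζub n hn
    rw [hwdef]
    apply harc
    have hDw : D (γ + π - δ₂/2 - b) = D (γ + ζ n - b) + (π - δ₂/2 - ζ n) - 2*π := by
      apply D_eq ⟨by linarith, by linarith⟩
      rcases D_spec (γ + ζ n - b) with ⟨a, ha⟩
      refine ⟨a + 1, ?_⟩
      push_cast
      linarith
    rw [hDw]
    exact ⟨by linarith, by linarith⟩
  have huniq : ∀ n ∈ FullN, ∀ m ∈ FullN, 2*π - ε ≤ d n → 2*π - ε ≤ d m → n = m := by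
    intro n hn m hm h1 h2
    by_contra hnm
    rw [hdval] at h1
    rw [hdval] at h2
    rcases D_spec (γ + ζ n - b) with ⟨a1, ha1⟩
    rcases D_spec (γ + ζ m - b) with ⟨a2, ha2⟩
    have hdn := D_mem (γ + ζ n - b)
    have hdm := D_mem (γ + ζ m - b)
    have hdn1 := hdn.1
    have hdn2 := hdn.2
    have hdm1 := hdm.1
    have hdm2 := hdm.2
    have hb1 : |ζ n - ζ m| < π := by
      rw [abs_sub_lt_iff]
      have q1 := hζπ n hn; have q2 := hζpos n hn
      have q3 := hζπ m hm; have q4 := hζpos m hm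
      constructor <;> linarith
    have hA : ((a1 - a2 : ℤ) : ℝ) * (2*π) =
        (ζ n - ζ m) - (D (γ + ζ n - b) - D (γ + ζ m - b)) := by
      push_cast
      linarith
    have hb2 : |D (γ + ζ n - b) - D (γ + ζ m - b)| ≤ ε := by
      rw [abs_le]
      constructor <;> linarith [hdn.2, hdm.2]
    have habs2 : |((a1 - a2 : ℤ) : ℝ) * (2*π)| < 2*π := by
      rw [hA]
      calc |(ζ n - ζ m) - (D (γ + ζ n - b) - D (γ + ζ m - b))|
          ≤ |ζ n - ζ m| + |D (γ + ζ n - b) - D (γ + ζ m - b)| := abs_sub _ _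
        _ < 2 * π := by linarith
    have hA0 : (a1 - a2 : ℤ) = 0 := by
      apply int_abs_lt_one
      rw [abs_mul, abs_of_pos Real.two_pi_pos] at habs2
      nlinarith [Real.two_pi_pos, abs_nonneg ((a1 - a2 : ℤ) : ℝ)]
    rw [hA0] at hA
    push_cast at hA
    have hsep := hζsep n hn m hm hnm
    have hle : |ζ n - ζ m| ≤ ε := by
      rw [abs_le]
      rcases abs_le.1 hb2 with ⟨q1, q2⟩
      constructor <;> linarith
    linarith
  -- the pick function
  obtain ⟨pick, hpickdef⟩ : ∃ x : ℝ → ℂ,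
      x = fun n => if 2*π - ε ≤ d n then w else if d n < π then u n else v n := ⟨_, rfl⟩
  have hpickval : ∀ n, pick n = if 2*π - ε ≤ d n then w else if d n < π then u n else v n := by
    intro n; rw [hpickdef]
  have hpick_mem : ∀ n ∈ FullN, pick n ∈ (↑S : Set ℂ) ∩ openSemicircle β := by
    intro n hn
    rw [hpickval]
    by_cases h1 : 2*π - ε ≤ d n
    · rw [if_pos h1]
      exact ⟨Finset.mem_coe.2 hwS, hw_arc n hn h1⟩
    · rw [if_neg h1]
      push_neg at h1
      by_cases h2 : d n < π
      · rw [if_pos h2]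
        exact ⟨Finset.mem_coe.2 (huS n hn), hu_arc n hn h2⟩
      · rw [if_neg h2]
        push_neg at h2
        exact ⟨Finset.mem_coe.2 (hvS n hn), hv_arc n hn h2 (by linarith)⟩
  have hpick_inj : Set.InjOn pick ↑FullN := by
    intro n hn' m hm' heq
    have hn := Finset.mem_coe.1 hn'
    have hm := Finset.mem_coe.1 hm'
    rw [hpickval, hpickval] at heq
    by_cases h1 : 2*π - ε ≤ d n <;> by_cases h2 : 2*π - ε ≤ d m
    · exact huniq n hn m hm h1 h2
    · rw [if_pos h1, if_neg h2] at heq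
      by_cases h3 : d m < π
      · rw [if_pos h3] at heq; exact absurd heq (hwu m hm)
      · rw [if_neg h3] at heq; exact absurd heq (hwv m hm)
    · rw [if_neg h1, if_pos h2] at heq
      by_cases h3 : d n < π
      · rw [if_pos h3] at heq; exact absurd heq.symm (hwu n hn)
      · rw [if_neg h3] at heq; exact absurd heq.symm (hwv n hn)
    · rw [if_neg h1, if_neg h2] at heq
      by_cases h3 : d n < π <;> by_cases h4 : d m < π
      · rw [if_pos h3, if_pos h4] at heq
        exact hu_inj hn' hm' heq
      · rw [if_pos h3, if_neg h4] at heq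
        exact absurd heq (huv n hn m hm)
      · rw [if_neg h3, if_pos h4] at heq
        exact absurd heq.symm (huv m hm n hn)
      · rw [if_neg h3, if_neg h4] at heq
        exact hv_inj hn' hm' heq
  have h1 : (FullN.image pick).card = k := by
    rw [Finset.card_image_of_injOn hpick_inj, hFullcard]
  have h2 : (↑(FullN.image pick) : Set ℂ) ⊆ ↑S ∩ openSemicircle β := by
    intro z hz
    rcases Finset.mem_image.1 (Finset.mem_coe.1 hz) with ⟨n, hn, rfl⟩
    exact hpick_mem n hn
  calc k = (↑(FullN.image pick) : Set ℂ).ncard := by rw [Set.ncard_coe_finset, h1]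
    _ ≤ _ := Set.ncard_le_ncard h2 (S.finite_toSet.inter_of_left _)

end S14


namespace S14
open Real Set

set_option maxHeartbeats 1600000 in
lemma even_exists {k s p : ℕ} (hk2 : 2 ≤ k) (Φ : Finset ℂ)
    (hΦ : ∀ z ∈ Φ, ‖z‖ = 1) (hcard : Φ.card = p)
    (hs : (Φ.filter (fun α => -α ∈ Φ)).card = 2 * s) (hks : p ≤ k + s) :
    ∃ S : Finset ℂ, Φ ⊆ S ∧ S.card = 2 * k + 2 ∧ (∀ z ∈ S, ‖z‖ = 1) ∧
      IsKRegular k ↑S := by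
  classical
  have hπ := Real.pi_pos
  have hπ3 := Real.pi_gt_three
  obtain ⟨Φneg, hΦneg⟩ : ∃ x : Finset ℂ, x = Φ.image (fun z => -z) := ⟨_, rfl⟩
  have hcardneg : Φneg.card = p := by
    rw [hΦneg, Finset.card_image_of_injective _ neg_injective, hcard]
  have hmemneg : ∀ z, z ∈ Φneg ↔ -z ∈ Φ := by
    intro z
    rw [hΦneg]
    constructor
    · intro h
      rcases Finset.mem_image.1 h with ⟨a, ha, rfl⟩
      rwa [neg_neg]
    · intro h
      exact Finset.mem_image.2 ⟨-z, h, neg_neg z⟩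
  have hfilter_eq : Φ.filter (fun α => -α ∈ Φ) = Φ ∩ Φneg := by
    ext z
    rw [Finset.mem_filter, Finset.mem_inter, hmemneg]
  have huni : (Φ ∪ Φneg).card + 2 * s = 2 * p := by
    have h1 := Finset.card_union_add_card_inter Φ Φneg
    rw [← hfilter_eq, hs, hcard, hcardneg] at h1
    omega
  have hunitU : ∀ z ∈ Φ ∪ Φneg, ‖z‖ = 1 := by
    intro z hz
    rcases Finset.mem_union.1 hz with h | h
    · exact hΦ z h
    · have h2 := (hmemneg z).1 h
      have := hΦ _ h2
      rwa [norm_neg] at this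
  have hsymU : ∀ z, z ∈ Φ ∪ Φneg → -z ∈ Φ ∪ Φneg := by
    intro z hz
    rcases Finset.mem_union.1 hz with h | h
    · exact Finset.mem_union_right _ ((hmemneg (-z)).2 (by rwa [neg_neg]))
    · exact Finset.mem_union_left _ ((hmemneg z).1 h)
  -- choose the extra pairs
  have hbadfin1 : {t | t ∈ Ioo (0:ℝ) 1 ∧ expI t ∈ (↑(Φ ∪ Φneg) : Set ℂ)}.Finite := by
    apply Set.Finite.of_finite_image (f := expI)
    · apply (Φ ∪ Φneg).finite_toSet.subset
      rintro y ⟨t, ⟨_, ht⟩, rfl⟩; exact ht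
    · intro a ha a' ha' hee
      have h1 := ha.1; have h2 := ha'.1
      simp only [Set.mem_Ioo] at h1 h2
      refine expI_inj ?_ hee
      rw [abs_sub_lt_iff]
      constructor <;> linarith
  have hbadfin2 : {t | t ∈ Ioo (0:ℝ) 1 ∧ expI (t + π) ∈ (↑(Φ ∪ Φneg) : Set ℂ)}.Finite := by
    apply Set.Finite.of_finite_image (f := fun t => expI (t + π))
    · apply (Φ ∪ Φneg).finite_toSet.subset
      rintro y ⟨t, ⟨_, ht⟩, rfl⟩; exact ht
    · intro a ha a' ha' hee
      have h1 := ha.1; have h2 := ha'.1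
      simp only [Set.mem_Ioo] at h1 h2
      have := expI_inj (x := a + π) (y := a' + π) ?_ hee
      · linarith
      · rw [abs_sub_lt_iff]
        constructor <;> linarith
  obtain ⟨T0, hT0sub, hT0card⟩ :=
    ((Set.Ioo_infinite (by norm_num : (0:ℝ) < 1)).diff (hbadfin1.union hbadfin2)).exists_subset_card_eq
      (k + 1 + s - p)
  have hT0 : ∀ t ∈ T0, t ∈ Ioo (0:ℝ) 1 ∧ expI t ∉ (↑(Φ ∪ Φneg) : Set ℂ) ∧
      expI (t + π) ∉ (↑(Φ ∪ Φneg) : Set ℂ) := by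
    intro t ht
    have h := hT0sub ht
    have h1 := h.1
    have h2 := h.2
    refine ⟨h1, ?_, ?_⟩
    · intro hc; exact h2 (Or.inl ⟨h1, hc⟩)
    · intro hc; exact h2 (Or.inr ⟨h1, hc⟩)
  obtain ⟨E, hEdef⟩ : ∃ x : Finset ℂ, x = T0.image expI := ⟨_, rfl⟩
  obtain ⟨En, hEndef⟩ : ∃ x : Finset ℂ, x = T0.image (fun t => expI (t + π)) := ⟨_, rfl⟩
  have hinjE : Set.InjOn expI ↑T0 := by
    intro a ha a' ha' hee
    have h1 := (hT0 a (Finset.mem_coe.1 ha)).1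
    have h2 := (hT0 a' (Finset.mem_coe.1 ha')).1
    simp only [Set.mem_Ioo] at h1 h2
    refine expI_inj ?_ hee
    rw [abs_sub_lt_iff]
    constructor <;> linarith
  have hinjEn : Set.InjOn (fun t => expI (t + π)) ↑T0 := by
    intro a ha a' ha' hee
    have h1 := (hT0 a (Finset.mem_coe.1 ha)).1
    have h2 := (hT0 a' (Finset.mem_coe.1 ha')).1
    simp only [Set.mem_Ioo] at h1 h2
    have := expI_inj (x := a + π) (y := a' + π) ?_ hee
    · linarith
    · rw [abs_sub_lt_iff]
      constructor <;> linarith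
  have hcardE : E.card = k + 1 + s - p := by
    rw [hEdef, Finset.card_image_of_injOn hinjE, hT0card]
  have hcardEn : En.card = k + 1 + s - p := by
    rw [hEndef, Finset.card_image_of_injOn hinjEn, hT0card]
  have hdisjEEn : Disjoint E En := by
    rw [Finset.disjoint_left]
    intro z hz1 hz2
    rw [hEdef] at hz1
    rw [hEndef] at hz2
    rcases Finset.mem_image.1 hz1 with ⟨t, ht, rfl⟩
    rcases Finset.mem_image.1 hz2 with ⟨t', ht', he⟩
    have h1 := (hT0 t (by exact ht)).1
    have h2 := (hT0 t' (by exact ht')).1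
    simp only [Set.mem_Ioo] at h1 h2
    have := expI_inj (x := t' + π) (y := t) ?_ he
    · linarith
    · rw [abs_sub_lt_iff]
      constructor <;> linarith
  have hdisjU : Disjoint (Φ ∪ Φneg) (E ∪ En) := by
    rw [Finset.disjoint_right]
    intro z hz hc
    rcases Finset.mem_union.1 hz with h | h
    · rw [hEdef] at h
      rcases Finset.mem_image.1 h with ⟨t, ht, rfl⟩
      exact (hT0 t ht).2.1 (Finset.mem_coe.2 hc)
    · rw [hEndef] at h
      rcases Finset.mem_image.1 h with ⟨t, ht, rfl⟩
      exact (hT0 t ht).2.2 (Finset.mem_coe.2 hc)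
  obtain ⟨S, hSdef⟩ : ∃ x : Finset ℂ, x = (Φ ∪ Φneg) ∪ (E ∪ En) := ⟨_, rfl⟩
  have hsubS : Φ ⊆ S := by
    rw [hSdef]
    exact (Finset.subset_union_left).trans Finset.subset_union_left
  have hScard : S.card = 2 * k + 2 := by
    rw [hSdef, Finset.card_union_of_disjoint hdisjU, Finset.card_union_of_disjoint hdisjEEn,
      hcardE, hcardEn]
    omega
  have hSunit : ∀ z ∈ S, ‖z‖ = 1 := by
    intro z hz
    rw [hSdef] at hz
    rcases Finset.mem_union.1 hz with h | h
    · exact hunitU z h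
    · rcases Finset.mem_union.1 h with h' | h'
      · rw [hEdef] at h'
        rcases Finset.mem_image.1 h' with ⟨t, _, rfl⟩
        exact abs_expI _
      · rw [hEndef] at h'
        rcases Finset.mem_image.1 h' with ⟨t, _, rfl⟩
        exact abs_expI _
  have hSsym : ∀ z ∈ S, -z ∈ S := by
    intro z hz
    rw [hSdef] at hz ⊢
    rcases Finset.mem_union.1 hz with h | h
    · exact Finset.mem_union_left _ (hsymU z h)
    · rcases Finset.mem_union.1 h with h' | h'
      · rw [hEdef] at h'
        rcases Finset.mem_image.1 h' with ⟨t, ht, rfl⟩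
        refine Finset.mem_union_right _ (Finset.mem_union_right _ ?_)
        rw [hEndef]
        refine Finset.mem_image.2 ⟨t, ht, ?_⟩
        rw [← expI_neg]
      · rw [hEndef] at h'
        rcases Finset.mem_image.1 h' with ⟨t, ht, rfl⟩
        refine Finset.mem_union_right _ (Finset.mem_union_left _ ?_)
        rw [hEdef]
        refine Finset.mem_image.2 ⟨t, ht, ?_⟩
        rw [← expI_neg, neg_neg]
  exact ⟨S, hsubS, hScard, hSunit, even_regular S hSunit hSsym hScard⟩

end S14

/-- A 1-regular but not k-regular p-element subset of the unit circle
with exactly s antipodal pairs and `k ≥ p - s` can be extended to a k-regular set by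
adding `2k+1-p` points when `s = 0`, and `2k+2-p` points when `s > 0`. -/
theorem stmt14 {k p s : ℕ} (hk : 1 < k) (hp : 3 ≤ p)
    (Φ : Finset ℂ) (hΦ : ∀ z ∈ Φ, ‖z‖ = 1) (hcard : Φ.card = p)
    (hs : (Φ.filter (fun α => -α ∈ Φ)).card = 2 * s)
    (h1reg : IsKRegular 1 ↑Φ) (hnkreg : ¬ IsKRegular k ↑Φ)
    (hks : p ≤ k + s) :
    (s = 0 → ∃ Φ' : Finset ℂ, (∀ z ∈ Φ', ‖z‖ = 1) ∧ Disjoint Φ' Φ ∧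
      Φ'.card + p = 2 * k + 1 ∧ IsKRegular k ↑(Φ ∪ Φ')) ∧
    (0 < s → ∃ Φ' : Finset ℂ, (∀ z ∈ Φ', ‖z‖ = 1) ∧ Disjoint Φ' Φ ∧
      Φ'.card + p = 2 * k + 2 ∧ IsKRegular k ↑(Φ ∪ Φ')) := by
  constructor
  · intro hs0
    subst hs0
    have hfe : ∀ α ∈ Φ, -α ∉ Φ := by
      intro α hα hc
      have hmem : α ∈ Φ.filter (fun α => -α ∈ Φ) := Finset.mem_filter.2 ⟨hα, hc⟩
      have h0 : Φ.filter (fun α => -α ∈ Φ) = ∅ := Finset.card_eq_zero.1 (by omega)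
      rw [h0] at hmem
      exact absurd hmem (Finset.notMem_empty α)
    obtain ⟨S, hsub, hScard, hSunit, hreg⟩ :=
      S14.odd_regular (show 2 ≤ k by omega) Φ hΦ (show Φ.card ≤ k by omega) hfe
    refine ⟨S \ Φ, ?_, Finset.sdiff_disjoint, ?_, ?_⟩
    · intro z hz
      exact hSunit z (Finset.mem_sdiff.1 hz).1
    · have h1 := Finset.card_sdiff_of_subset hsub
      have h2 := Finset.card_le_card hsub
      omega
    · have he : Φ ∪ (S \ Φ) = S := Finset.union_sdiff_of_subset hsub
      rw [he]
      exact hreg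
  · intro _
    obtain ⟨S, hsub, hScard, hSunit, hreg⟩ :=
      S14.even_exists (show 2 ≤ k by omega) Φ hΦ hcard hs hks
    refine ⟨S \ Φ, ?_, Finset.sdiff_disjoint, ?_, ?_⟩
    · intro z hz
      exact hSunit z (Finset.mem_sdiff.1 hz).1
    · have h1 := Finset.card_sdiff_of_subset hsub
      have h2 := Finset.card_le_card hsub
      omega
    · have he : Φ ∪ (S \ Φ) = S := Finset.union_sdiff_of_subset hsub
      rw [he]
      exact hreg

end
end
end

section
/- Let k > 1 and let Π be a finite subset of the unit circle Ω containing at least one non-antipodal point (a point α ∈ Π with −α ∉ Π). Then the following are equivalent: (a) there exists β ∈ Ω \ Π such that Π ∪ {β} is k-regular; (b) there exists a non-antipodal point γ ∈ Π such that Π \ {γ} is (k−1)-regular. -/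
open scoped Classical
open Matrix

noncomputable section

namespace Stmt15
open Real

/-! ### trigonometric window lemmas -/

lemma sin_pos_aux {x : ℝ} (h0 : 0 < x) (h2 : x ≤ 2*π) : 0 < Real.sin x ↔ x < π := by
  constructor
  · intro hs
    by_contra hx
    push_neg at hx
    have h1 : Real.sin (x - π) ≥ 0 := by
      apply Real.sin_nonneg_of_nonneg_of_le_pi <;> linarith
    rw [Real.sin_sub_pi] at h1
    linarith
  · intro hx
    exact Real.sin_pos_of_pos_of_lt_pi h0 hx

lemma sin_pos_iff {x : ℝ} (h1 : -(2*π) < x) (h2 : x ≤ 2*π) :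
    0 < Real.sin x ↔ (0 < x ∧ x < π) ∨ x < -π := by
  have hπ := Real.pi_pos
  rcases lt_or_ge 0 x with h0 | h0
  · rw [sin_pos_aux h0 h2]
    constructor
    · intro h; exact Or.inl ⟨h0, h⟩
    · rintro (⟨_, h⟩ | h); exact h; linarith
  · have hy0 : 0 < x + 2*π := by linarith
    have hy2 : x + 2*π ≤ 2*π := by linarith
    have : Real.sin x = Real.sin (x + 2*π) := (Real.sin_add_two_pi x).symm
    rw [this, sin_pos_aux hy0 hy2]
    constructor
    · intro h; right; linarith
    · rintro (⟨h, _⟩ | h); linarith; linarith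

lemma sin_neg_iff {x : ℝ} (h1 : -(2*π) ≤ x) (h2 : x < 2*π) :
    Real.sin x < 0 ↔ (-π < x ∧ x < 0) ∨ π < x := by
  have h : Real.sin x < 0 ↔ 0 < Real.sin (-x) := by
    rw [Real.sin_neg]; constructor <;> intro <;> linarith
  rw [h, sin_pos_iff (by linarith) (by linarith)]
  constructor
  · rintro (⟨ha, hb⟩ | h)
    · exact Or.inl ⟨by linarith, by linarith⟩
    · right; linarith
  · rintro (⟨ha, hb⟩ | h)
    · exact Or.inl ⟨by linarith, by linarith⟩
    · right; linarith

/-! ### unit circle basics -/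

lemma unit_im_eq_sin {u : ℂ} (hu : ‖u‖ = 1) : u.im = Real.sin u.arg := by
  rw [Complex.sin_arg, hu, div_one]

lemma unit_eq_exp_arg {u : ℂ} (hu : ‖u‖ = 1) :
    u = Complex.exp (u.arg * Complex.I) := by
  conv_lhs => rw [← Complex.norm_mul_exp_arg_mul_I u]
  rw [hu, Complex.ofReal_one, one_mul]

lemma exp_mul_exp (x y : ℝ) :
    Complex.exp ((x : ℂ) * Complex.I) * Complex.exp ((y : ℂ) * Complex.I)
      = Complex.exp (((x + y : ℝ) : ℂ) * Complex.I) := by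
  rw [← Complex.exp_add]
  congr 1
  push_cast
  ring

lemma mul_conj_self {w : ℂ} (hw : ‖w‖ = 1) : w * (starRingEnd ℂ) w = 1 := by
  rw [Complex.mul_conj, Complex.normSq_eq_norm_sq, hw]; norm_num

lemma conj_mul_self {w : ℂ} (hw : ‖w‖ = 1) : (starRingEnd ℂ) w * w = 1 := by
  rw [mul_comm]; exact mul_conj_self hw

lemma mem_semi_iff {z w : ℂ} (hz : ‖z‖ = 1) (hw : ‖w‖ = 1) :
    z ∈ openSemicircle w ↔ 0 < (z * (starRingEnd ℂ) w).im := by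
  constructor
  · rintro ⟨t, ht0, htπ, rfl⟩
    rw [mul_assoc, mul_conj_self hw, mul_one, Complex.exp_ofReal_mul_I_im]
    exact Real.sin_pos_of_pos_of_lt_pi ht0 htπ
  · intro h
    set u := z * (starRingEnd ℂ) w with hu
    have huabs : ‖u‖ = 1 := by
      rw [hu, norm_mul, Complex.norm_conj, hz, hw, one_mul]
    have him : Real.sin u.arg = u.im := (unit_im_eq_sin huabs).symm
    have harg1 : -π < u.arg := Complex.neg_pi_lt_arg u
    have harg2 : u.arg ≤ π := Complex.arg_le_pi u
    have hpos : 0 < u.arg ∧ u.arg < π := by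
      have := (sin_pos_iff (x := u.arg) (by linarith [Real.pi_pos]) (by linarith [Real.pi_pos])).mp (by rw [him]; exact h)
      rcases this with h' | h'
      · exact h'
      · linarith
    refine ⟨u.arg, hpos.1, hpos.2, ?_⟩
    have : Complex.exp (u.arg * Complex.I) = u := (unit_eq_exp_arg huabs).symm
    rw [this, hu, mul_assoc, conj_mul_self hw, mul_one]

/-! ### counting -/

def cnt (Ψ : Finset ℂ) (w : ℂ) : ℕ :=
  (Ψ.filter fun z => 0 < (z * (starRingEnd ℂ) w).im).card

lemma ncard_inter_semi (Ψ : Finset ℂ) (hΨ : ∀ z ∈ Ψ, ‖z‖ = 1)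
    {w : ℂ} (hw : ‖w‖ = 1) :
    ((Ψ : Set ℂ) ∩ openSemicircle w).ncard = cnt Ψ w := by
  have : (Ψ : Set ℂ) ∩ openSemicircle w
      = ((Ψ.filter fun z => 0 < (z * (starRingEnd ℂ) w).im) : Finset ℂ) := by
    ext z
    simp only [Set.mem_inter_iff, Finset.coe_filter, Set.mem_setOf_eq, Finset.mem_coe,
      Finset.mem_filter]
    constructor
    · rintro ⟨hzΨ, hzS⟩
      exact ⟨hzΨ, (mem_semi_iff (hΨ z hzΨ) hw).mp hzS⟩
    · rintro ⟨hzΨ, hzS⟩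
      exact ⟨hzΨ, (mem_semi_iff (hΨ z hzΨ) hw).mpr hzS⟩
  rw [this, Set.ncard_coe_finset]
  rfl

lemma isKRegular_iff (k : ℕ) (Ψ : Finset ℂ) (hΨ : ∀ z ∈ Ψ, ‖z‖ = 1) :
    IsKRegular k ↑Ψ ↔ ∀ w : ℂ, ‖w‖ = 1 → k ≤ cnt Ψ w := by
  constructor
  · intro h w hw
    have := h w hw
    rwa [ncard_inter_semi Ψ hΨ hw] at this
  · intro h w hw
    have := h w hw
    rwa [ncard_inter_semi Ψ hΨ hw]

lemma cnt_insert (Ψ : Finset ℂ) (x : ℂ) (hx : x ∉ Ψ) (w : ℂ) :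
    cnt (insert x Ψ) w = cnt Ψ w + if 0 < (x * (starRingEnd ℂ) w).im then 1 else 0 := by
  rw [cnt, Finset.filter_insert]
  split
  · rw [Finset.card_insert_of_notMem (fun hc => hx (Finset.mem_of_mem_filter x hc))]; rfl
  · rw [add_zero]; rfl

lemma card_filter_or_disj (s : Finset ℂ) (P Q : ℂ → Prop)
    [DecidablePred P] [DecidablePred Q]
    (h : ∀ z ∈ s, P z → ¬ Q z) :
    (s.filter fun z => P z ∨ Q z).card = (s.filter P).card + (s.filter Q).card := by
  rw [Finset.filter_or, Finset.card_union_of_disjoint (Finset.disjoint_filter.mpr h)]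

/-! ### the angle coordinate -/

def theta (β z : ℂ) : ℝ := β.arg + (z * (starRingEnd ℂ) β).arg

lemma conj_exp_real_mul_I (t : ℝ) :
    (starRingEnd ℂ) (Complex.exp (t * Complex.I)) = Complex.exp (((-t : ℝ) : ℂ) * Complex.I) := by
  rw [← Complex.exp_conj]
  congr 1
  simp [Complex.ext_iff]

lemma abs_unit_mul_conj {z w : ℂ} (hz : ‖z‖ = 1) (hw : ‖w‖ = 1) :
    ‖z * (starRingEnd ℂ) w‖ = 1 := by
  rw [norm_mul, Complex.norm_conj, hz, hw, one_mul]

lemma exp_theta {β z : ℂ} (hβ : ‖β‖ = 1) (hz : ‖z‖ = 1) :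
    Complex.exp ((theta β z : ℝ) * Complex.I) = z := by
  have h1 : Complex.exp ((β.arg : ℝ) * Complex.I) = β := (unit_eq_exp_arg hβ).symm
  have h2 : Complex.exp (((z * (starRingEnd ℂ) β).arg : ℝ) * Complex.I)
      = z * (starRingEnd ℂ) β := (unit_eq_exp_arg (abs_unit_mul_conj hz hβ)).symm
  rw [theta, ← exp_mul_exp, h1, h2]
  rw [mul_comm β, mul_assoc]
  rw [mul_comm ((starRingEnd ℂ) β) β, mul_conj_self hβ, mul_one]

lemma theta_lb {β z : ℂ} : β.arg - π < theta β z := by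
  have := Complex.neg_pi_lt_arg (z * (starRingEnd ℂ) β)
  rw [theta]; linarith

lemma theta_ub {β z : ℂ} : theta β z ≤ β.arg + π := by
  have := Complex.arg_le_pi (z * (starRingEnd ℂ) β)
  rw [theta]; linarith

lemma theta_inj {β z₁ z₂ : ℂ} (hβ : ‖β‖ = 1) (h1 : ‖z₁‖ = 1)
    (h2 : ‖z₂‖ = 1) (h : theta β z₁ = theta β z₂) : z₁ = z₂ := by
  rw [← exp_theta hβ h1, ← exp_theta hβ h2, h]

lemma theta_self {β : ℂ} (hβ : ‖β‖ = 1) : theta β β = β.arg := by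
  rw [theta, mul_conj_self hβ, Complex.arg_one, add_zero]

lemma theta_neg {β z : ℂ} (hβ : ‖β‖ = 1) (hz : ‖z‖ = 1) :
    theta β (-z) = if theta β z ≤ β.arg then theta β z + π else theta β z - π := by
  have hnz : ‖-z‖ = 1 := by rwa [norm_neg]
  have hexp : Complex.exp ((theta β (-z) : ℝ) * Complex.I)
      = Complex.exp (((theta β z + π) : ℝ) * Complex.I) := by
    rw [exp_theta hβ hnz, ← exp_mul_exp, exp_theta hβ hz]
    rw [Complex.exp_mul_I]
    simp
  have hone : Complex.exp (((theta β (-z) - (theta β z + π)) : ℝ) * Complex.I) = 1 := by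
    rw [Complex.ofReal_sub, sub_mul, Complex.exp_sub, hexp, div_self (Complex.exp_ne_zero _)]
  obtain ⟨n, hn⟩ := Complex.exp_eq_one_iff.mp hone
  have hreal : (theta β (-z) - (theta β z + π)) = n * (2 * π) := by
    have := hn
    rw [show ((n : ℂ) * (2 * ↑π * Complex.I)) = ((n * (2*π) : ℝ) : ℂ) * Complex.I by push_cast; ring] at this
    have := mul_right_cancel₀ Complex.I_ne_zero this
    exact_mod_cast this
  have hπ := Real.pi_pos
  have b1 : β.arg - π < theta β (-z) := theta_lb
  have b2 : theta β (-z) ≤ β.arg + π := theta_ub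
  have b3 : β.arg - π < theta β z := theta_lb
  have b4 : theta β z ≤ β.arg + π := theta_ub
  have hn0 : n = 0 ∨ n = -1 := by
    have l1 : (n : ℝ) * (2*π) < π := by linarith
    have l2 : -(3*π) < (n:ℝ) * (2*π) := by linarith
    have i1 : (n:ℝ) < 1 := by nlinarith
    have i2 : (-2 : ℝ) < (n:ℝ) := by nlinarith
    have i1' : n < 1 := by exact_mod_cast i1
    have i2' : (-2:ℤ) < n := by exact_mod_cast i2
    omega
  rcases hn0 with rfl | rfl
  · simp only [Int.cast_zero, zero_mul] at hreal
    have heq : theta β (-z) = theta β z + π := by linarith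
    rw [heq, if_pos (by linarith)]
  · simp only [Int.cast_neg, Int.cast_one, neg_mul, one_mul] at hreal
    have heq : theta β (-z) = theta β z - π := by linarith
    rw [heq, if_neg (by push_neg; linarith)]

lemma im_mul_conj_exp {β z : ℂ} (hβ : ‖β‖ = 1) (hz : ‖z‖ = 1) (t : ℝ) :
    (z * (starRingEnd ℂ) (Complex.exp (t * Complex.I))).im
      = Real.sin (theta β z - t) := by
  have hzz : z * (starRingEnd ℂ) (Complex.exp (t * Complex.I))
      = Complex.exp (((theta β z - t) : ℝ) * Complex.I) := by
    conv_lhs => rw [← exp_theta hβ hz]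
    rw [conj_exp_real_mul_I, exp_mul_exp]
    ring_nf
  rw [hzz, Complex.exp_ofReal_mul_I_im]

lemma im_mul_conj_units {γ z w : ℂ} (hγ : ‖γ‖ = 1) (hz : ‖z‖ = 1)
    (hw : ‖w‖ = 1) :
    (z * (starRingEnd ℂ) w).im = Real.sin (theta γ z - theta γ w) := by
  conv_lhs => rw [← exp_theta hγ hw]
  exact im_mul_conj_exp hγ hz _

lemma cond_iff {β z : ℂ} (hβ : ‖β‖ = 1) (hz : ‖z‖ = 1)
    {t : ℝ} (ht1 : β.arg - π ≤ t) (ht2 : t ≤ β.arg) :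
    0 < (z * (starRingEnd ℂ) (Complex.exp (t * Complex.I))).im ↔
      t < theta β z ∧ theta β z < t + π := by
  have hπ := Real.pi_pos
  rw [im_mul_conj_exp hβ hz]
  have r1 : -(2*π) < theta β z - t := by have := theta_lb (β := β) (z := z); linarith
  have r2 : theta β z - t ≤ 2*π := by have := theta_ub (β := β) (z := z); linarith
  rw [sin_pos_iff r1 r2]
  constructor
  · rintro (⟨h1, h2⟩ | h)
    · constructor <;> linarith
    · exfalso
      have := theta_lb (β := β) (z := z)
      linarith
  · rintro ⟨h1, h2⟩
    exact Or.inl ⟨by linarith, by linarith⟩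

/-! ### step lemmas -/

def Ncnt (s : Finset ℂ) (f : ℂ → ℝ) (t : ℝ) : ℕ :=
  (s.filter fun z => t < f z ∧ f z < t + π).card

lemma gap_right (s : Finset ℂ) (f : ℂ → ℝ) (x : ℝ) :
    ∃ δ > 0, ∀ z ∈ s, f z ∉ Set.Ioc x (x + δ) := by
  by_cases hne : ((s.image f).filter (fun y => x < y)).Nonempty
  · set T := (s.image f).filter (fun y => x < y) with hT
    set m := T.min' hne with hm
    have hmx : x < m := (Finset.mem_filter.mp (T.min'_mem hne)).2
    refine ⟨(m - x)/2, by linarith, ?_⟩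
    intro z hz hmem
    rcases hmem with ⟨h1, h2⟩
    have hzT : f z ∈ T := Finset.mem_filter.mpr ⟨Finset.mem_image_of_mem f hz, h1⟩
    have : m ≤ f z := T.min'_le _ hzT
    linarith
  · refine ⟨1, one_pos, ?_⟩
    intro z hz hmem
    exact hne ⟨f z, Finset.mem_filter.mpr ⟨Finset.mem_image_of_mem f hz, hmem.1⟩⟩

lemma gap_left (s : Finset ℂ) (f : ℂ → ℝ) (x : ℝ) :
    ∃ δ > 0, ∀ z ∈ s, f z ∉ Set.Ico (x - δ) x := by
  by_cases hne : ((s.image f).filter (fun y => y < x)).Nonempty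
  · set T := (s.image f).filter (fun y => y < x) with hT
    set m := T.max' hne with hm
    have hmx : m < x := (Finset.mem_filter.mp (T.max'_mem hne)).2
    refine ⟨(x - m)/2, by linarith, ?_⟩
    intro z hz hmem
    rcases hmem with ⟨h1, h2⟩
    have hzT : f z ∈ T := Finset.mem_filter.mpr ⟨Finset.mem_image_of_mem f hz, h2⟩
    have : f z ≤ m := T.le_max' _ hzT
    linarith
  · refine ⟨1, one_pos, ?_⟩
    intro z hz hmem
    exact hne ⟨f z, Finset.mem_filter.mpr ⟨Finset.mem_image_of_mem f hz, hmem.2⟩⟩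

lemma step_right (s : Finset ℂ) (f : ℂ → ℝ) (t : ℝ) :
    ∃ δ₀ > 0, ∀ δ, 0 < δ → δ ≤ δ₀ →
      Ncnt s f (t + δ) = Ncnt s f t + (s.filter fun z => f z = t + π).card := by
  obtain ⟨δ₁, hδ₁, hg₁⟩ := gap_right s f t
  obtain ⟨δ₂, hδ₂, hg₂⟩ := gap_right s f (t + π)
  have hπ := Real.pi_pos
  refine ⟨min (min δ₁ δ₂) (π/2), by positivity, ?_⟩
  intro δ hδ0 hδle
  have hd1 : δ ≤ δ₁ := le_trans hδle (le_trans (min_le_left _ _) (min_le_left _ _))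
  have hd2 : δ ≤ δ₂ := le_trans hδle (le_trans (min_le_left _ _) (min_le_right _ _))
  have hd3 : δ < π := by
    have : δ ≤ π/2 := le_trans hδle (min_le_right _ _)
    linarith
  have hfe : (s.filter fun z => t + δ < f z ∧ f z < (t + δ) + π)
      = s.filter fun z => (t < f z ∧ f z < t + π) ∨ f z = t + π := by
    apply Finset.filter_congr
    intro z hz
    have g1 : f z ∉ Set.Ioc t (t + δ₁) := hg₁ z hz
    have g2 : f z ∉ Set.Ioc (t + π) (t + π + δ₂) := hg₂ z hz
    simp only [Set.mem_Ioc, not_and, not_le] at g1 g2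
    constructor
    · rintro ⟨h1, h2⟩
      rcases lt_trichotomy (f z) (t + π) with h | h | h
      · left
        refine ⟨?_, h⟩
        linarith
      · right; exact h
      · exfalso
        have := g2 h
        linarith
    · rintro (⟨h1, h2⟩ | h)
      · constructor
        · rcases le_or_gt (f z) (t + δ) with h' | h'
          · exfalso; have := g1 h1; linarith
          · exact h'
        · linarith
      · constructor <;> [linarith; linarith]
  rw [Ncnt, hfe, Finset.filter_or, Finset.card_union_of_disjoint]
  · rfl
  · rw [Finset.disjoint_filter]
    rintro z hz ⟨h1, h2⟩ h3
    linarith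

lemma step_left (s : Finset ℂ) (f : ℂ → ℝ) (t : ℝ) :
    ∃ δ₀ > 0, ∀ δ, 0 < δ → δ ≤ δ₀ →
      Ncnt s f (t - δ) = Ncnt s f t + (s.filter fun z => f z = t).card := by
  obtain ⟨δ₁, hδ₁, hg₁⟩ := gap_left s f t
  obtain ⟨δ₂, hδ₂, hg₂⟩ := gap_left s f (t + π)
  have hπ := Real.pi_pos
  refine ⟨min (min δ₁ δ₂) (π/2), by positivity, ?_⟩
  intro δ hδ0 hδle
  have hd1 : δ ≤ δ₁ := le_trans hδle (le_trans (min_le_left _ _) (min_le_left _ _))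
  have hd2 : δ ≤ δ₂ := le_trans hδle (le_trans (min_le_left _ _) (min_le_right _ _))
  have hd3 : δ < π := by
    have : δ ≤ π/2 := le_trans hδle (min_le_right _ _)
    linarith
  have hfe : (s.filter fun z => t - δ < f z ∧ f z < (t - δ) + π)
      = s.filter fun z => (t < f z ∧ f z < t + π) ∨ f z = t := by
    apply Finset.filter_congr
    intro z hz
    have g1 : f z ∉ Set.Ico (t - δ₁) t := hg₁ z hz
    have g2 : f z ∉ Set.Ico (t + π - δ₂) (t + π) := hg₂ z hz
    simp only [Set.mem_Ico, not_and, not_lt] at g1 g2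
    constructor
    · rintro ⟨h1, h2⟩
      rcases lt_trichotomy (f z) t with h | h | h
      · exfalso
        have := g1 (by linarith)
        linarith
      · right; exact h
      · left
        refine ⟨h, ?_⟩
        rcases lt_or_ge (f z) (t + π - δ₂) with h' | h'
        · linarith
        · have := g2 h'
          linarith
    · rintro (⟨h1, h2⟩ | h)
      · refine ⟨by linarith, ?_⟩
        rcases lt_or_ge (f z) (t + π - δ₂) with h' | h'
        · linarith
        · have := g2 h'
          linarith
      · constructor <;> [linarith; linarith]
  rw [Ncnt, hfe, Finset.filter_or, Finset.card_union_of_disjoint]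
  · rfl
  · rw [Finset.disjoint_filter]
    rintro z hz ⟨h1, h2⟩ h3
    linarith

/-! ### misc helpers -/

lemma exists_eps (T : Finset ℝ) (hT : ∀ x ∈ T, 0 < x) : ∃ ε > 0, ∀ x ∈ T, ε < x := by
  by_cases h : T.Nonempty
  · refine ⟨T.min' h / 2, by have := hT _ (T.min'_mem h); linarith, ?_⟩
    intro x hx
    have h1 := T.min'_le x hx
    have h2 := hT _ (T.min'_mem h)
    have h3 := hT _ hx
    linarith
  · exact ⟨1, one_pos, fun x hx => absurd ⟨x, hx⟩ h⟩

lemma unit_real_cases {u : ℂ} (h : ‖u‖ = 1) (h2 : u.im = 0) : u = 1 ∨ u = -1 := by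
  have habs : ‖u‖ = |u.re| := by
    rw [Complex.norm_def, Complex.normSq_apply, h2]
    rw [mul_zero, add_zero, Real.sqrt_mul_self_eq_abs]
  rw [habs] at h
  rcases (abs_eq (by norm_num : (0:ℝ) ≤ 1)).mp h with h' | h'
  · left; exact Complex.ext h' h2
  · right
    apply Complex.ext
    · simpa using h'
    · simpa using h2

lemma im_zero_unit {z w : ℂ} (hz : ‖z‖ = 1) (hw : ‖w‖ = 1)
    (h : (z * (starRingEnd ℂ) w).im = 0) : z = w ∨ z = -w := by
  have hu : ‖z * (starRingEnd ℂ) w‖ = 1 := abs_unit_mul_conj hz hw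
  have hzw : z * (starRingEnd ℂ) w * w = z := by
    rw [mul_assoc, conj_mul_self hw, mul_one]
  rcases unit_real_cases hu h with h' | h'
  · left; rw [← hzw, h', one_mul]
  · right; rw [← hzw, h']; ring

lemma cnt_pair (Ψ : Finset ℂ) (hΨ : ∀ z ∈ Ψ, ‖z‖ = 1) (w : ℂ) :
    cnt Ψ w + cnt Ψ (-w)
      + (Ψ.filter fun z => (z * (starRingEnd ℂ) w).im = 0).card = Ψ.card := by
  have h1 : cnt Ψ (-w) = (Ψ.filter fun z => (z * (starRingEnd ℂ) w).im < 0).card := by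
    rw [cnt]
    congr 1
    apply Finset.filter_congr
    intro z hz
    rw [map_neg, mul_neg, Complex.neg_im]
    exact ⟨fun h => by simpa using neg_pos.mp h, fun h => by simpa using neg_pos.mpr h⟩
  rw [h1]
  have h2 := Finset.card_filter_add_card_filter_not
    (s := Ψ) (p := fun z => 0 < (z * (starRingEnd ℂ) w).im)
  have h3 : (Ψ.filter fun z => ¬ 0 < (z * (starRingEnd ℂ) w).im).card
      = (Ψ.filter fun z => (z * (starRingEnd ℂ) w).im < 0).card
        + (Ψ.filter fun z => (z * (starRingEnd ℂ) w).im = 0).card := by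
    rw [← card_filter_or_disj]
    · congr 1
      apply Finset.filter_congr
      intro z hz
      push_neg
      constructor
      · intro h
        rcases lt_or_eq_of_le h with h | h
        · exact Or.inl h
        · exact Or.inr h
      · rintro (h | h)
        · exact h.le
        · exact le_of_eq h
    · intro z hz h1 h2
      rw [h2] at h1
      exact lt_irrefl 0 h1
  rw [cnt] at *
  omega

set_option maxHeartbeats 2000000 in
lemma forward {k : ℕ} (hk : 1 < k) (Φ : Finset ℂ)
    (hΦ : ∀ z ∈ Φ, ‖z‖ = 1)
    {α : ℂ} (hαΦ : α ∈ Φ) (hαn : -α ∉ Φ)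
    {β : ℂ} (hβ1 : ‖β‖ = 1) (hβ2 : β ∉ Φ)
    (hreg : ∀ w : ℂ, ‖w‖ = 1 → k ≤ cnt (insert β Φ) w) :
    ∃ γ ∈ Φ, -γ ∉ Φ ∧ ∀ w : ℂ, ‖w‖ = 1 → k - 1 ≤ cnt (Φ.erase γ) w := by
  have hπ := Real.pi_pos
  set b := β.arg with hb
  set f : ℂ → ℝ := theta β with hfdef
  set N : ℝ → ℕ := Ncnt Φ f with hNdef
  -- counting over Φ at exp(t i) equals N t for t in the window
  have hcnteq : ∀ t : ℝ, b - π ≤ t → t ≤ b →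
      cnt Φ (Complex.exp (t * Complex.I)) = N t := by
    intro t ht1 ht2
    rw [cnt, hNdef, Ncnt]
    congr 1
    apply Finset.filter_congr
    intro z hz
    have := cond_iff hβ1 (hΦ z hz) ht1 ht2
    constructor
    · intro h; exact this.mp h
    · intro h; exact this.mpr h
  -- regularity in N-terms
  have hmain : ∀ t : ℝ, b - π ≤ t → t ≤ b →
      k ≤ N t + if (t < b ∧ b < t + π) then 1 else 0 := by
    intro t ht1 ht2
    have hwu : ‖Complex.exp (t * Complex.I)‖ = 1 :=
      Complex.norm_exp_ofReal_mul_I t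
    have h1 := hreg _ hwu
    rw [cnt_insert Φ β hβ2, hcnteq t ht1 ht2] at h1
    have hβc : (0 < (β * (starRingEnd ℂ) (Complex.exp (t * Complex.I))).im)
        ↔ (t < b ∧ b < t + π) := by
      have := cond_iff hβ1 hβ1 ht1 ht2
      rwa [theta_self hβ1, ← hb] at this
    by_cases hc : t < b ∧ b < t + π
    · rw [if_pos hc]
      rwa [if_pos (hβc.mpr hc)] at h1
    · rw [if_neg hc]
      rwa [if_neg (fun hx => hc (hβc.mp hx)), add_zero] at h1
  have hNlb : ∀ t : ℝ, b - π ≤ t → t ≤ b → k ≤ N t + 1 := by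
    intro t ht1 ht2
    have := hmain t ht1 ht2
    split at this <;> omega
  have hNend1 : k ≤ N (b - π) := by
    have := hmain (b - π) le_rfl (by linarith)
    rw [if_neg (by rintro ⟨_, h⟩; linarith)] at this
    omega
  have hNend2 : k ≤ N b := by
    have := hmain b (by linarith) le_rfl
    rw [if_neg (by rintro ⟨h, _⟩; linarith)] at this
    omega
  -- no point of Φ has f-value b (that would be β itself)
  have hcard_b : (Φ.filter fun z => f z = b).card = 0 := by
    rw [Finset.card_eq_zero, Finset.filter_eq_empty_iff]
    intro z hz hfz
    exact hβ2 (by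
      have : z = β := theta_inj hβ1 (hΦ z hz) hβ1 (by rw [hfdef] at hfz; rw [hfz, theta_self hβ1])
      rwa [this] at hz)
  -- uniqueness of f-values
  have hcard_eq : ∀ (v : ℝ) (z₀ : ℂ), z₀ ∈ Φ → f z₀ = v →
      (Φ.filter fun z => f z = v).card = 1 := by
    intro v z₀ hz₀ hv
    have : (Φ.filter fun z => f z = v) = {z₀} := by
      ext z
      simp only [Finset.mem_filter, Finset.mem_singleton]
      constructor
      · rintro ⟨hz, hfz⟩
        exact theta_inj hβ1 (hΦ z hz) (hΦ z₀ hz₀) (hfz.trans hv.symm)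
      · rintro rfl
        exact ⟨hz₀, hv⟩
    rw [this, Finset.card_singleton]
  -- the key final verification
  have key : ∀ γ, γ ∈ Φ → -γ ∉ Φ →
      (∀ t : ℝ, b - π < t → t < b → N t = k - 1 → ¬(t < f γ ∧ f γ < t + π)) →
      ∀ w : ℂ, ‖w‖ = 1 → k - 1 ≤ cnt (Φ.erase γ) w := by
    intro γ hγΦ hγn hexcl w hw
    have herase : cnt (Φ.erase γ) w
        = ((Φ.filter fun z => 0 < (z * (starRingEnd ℂ) w).im).erase γ).card := by
      rw [cnt, Finset.filter_erase]
    have hupper : cnt (insert β Φ) w ≤ cnt Φ w + 1 := by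
      rw [cnt_insert Φ β hβ2]
      split <;> omega
    have hlow1 : k ≤ cnt Φ w + 1 := le_trans (hreg w hw) hupper
    by_cases hγw : 0 < (γ * (starRingEnd ℂ) w).im
    · -- need cnt Φ w ≥ k
      have hkc : k ≤ cnt Φ w := by
        by_cases hβw : 0 < (β * (starRingEnd ℂ) w).im
        · set u := β * (starRingEnd ℂ) w with hu
          have huabs : ‖u‖ = 1 := abs_unit_mul_conj hβ1 hw
          have harg : 0 < u.arg ∧ u.arg < π := by
            have hsin : 0 < Real.sin u.arg := by
              rw [← unit_im_eq_sin huabs]; exact hβw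
            have h1 := Complex.neg_pi_lt_arg u
            have h2 := Complex.arg_le_pi u
            rcases (sin_pos_iff (by linarith) (by linarith)).mp hsin with h | h
            · exact h
            · linarith
          set t : ℝ := b - u.arg with htdef
          have hwt : w = Complex.exp (t * Complex.I) := by
            have hcu : (starRingEnd ℂ) u * β = w := by
              have hcu1 : (starRingEnd ℂ) u = (starRingEnd ℂ) β * w := by
                rw [hu, _root_.map_mul, Complex.conj_conj]
              rw [hcu1, mul_comm ((starRingEnd ℂ) β) w, mul_assoc, conj_mul_self hβ1, mul_one]
            have hβexp : β = Complex.exp ((b : ℝ) * Complex.I) := unit_eq_exp_arg hβ1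
            have huexp : Complex.exp ((u.arg : ℝ) * Complex.I) = u := (unit_eq_exp_arg huabs).symm
            have e1 : (starRingEnd ℂ) u = Complex.exp (((-u.arg : ℝ) : ℂ) * Complex.I) := by
              rw [← conj_exp_real_mul_I, huexp]
            have e2 : Complex.exp (((-u.arg : ℝ) : ℂ) * Complex.I)
                * Complex.exp ((b : ℝ) * Complex.I) = Complex.exp ((t : ℝ) * Complex.I) := by
              rw [exp_mul_exp]
              have : -u.arg + b = t := by rw [htdef]; ring
              rw [this]
            rw [← hcu, e1]
            conv_lhs => rw [hβexp]
            exact e2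
          have h1 : cnt Φ w = N t := by
            rw [hwt]; exact hcnteq t (by rw [htdef]; linarith [harg.2]) (by rw [htdef]; linarith [harg.1])
          by_contra hlt
          push_neg at hlt
          have hNt : N t = k - 1 := by omega
          have hγmem : t < f γ ∧ f γ < t + π := by
            have := cond_iff hβ1 (hΦ γ hγΦ) (t := t)
              (by rw [htdef]; linarith [harg.2]) (by rw [htdef]; linarith [harg.1])
            rw [← hwt] at this
            exact this.mp hγw
          exact hexcl t (by rw [htdef]; linarith [harg.2]) (by rw [htdef]; linarith [harg.1]) hNt hγmem
        · have := hreg w hw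
          rwa [cnt_insert Φ β hβ2, if_neg hβw, add_zero] at this
      have hγf : γ ∈ Φ.filter fun z => 0 < (z * (starRingEnd ℂ) w).im :=
        Finset.mem_filter.mpr ⟨hγΦ, hγw⟩
      rw [herase, Finset.card_erase_of_mem hγf]
      rw [cnt] at hkc
      omega
    · have hγf : γ ∉ Φ.filter fun z => 0 < (z * (starRingEnd ℂ) w).im := by
        intro hc
        exact hγw (Finset.mem_filter.mp hc).2
      rw [herase, Finset.erase_eq_of_notMem hγf]
      rw [cnt] at hlow1
      omega
  -- the deficiency set
  set W : Set ℝ := {t | (b - π < t ∧ t < b) ∧ N t = k - 1} with hWdef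
  by_cases hWne : W.Nonempty
  · -- main case
    set m := sInf W with hm
    set s := sSup W with hs
    have hbddB : BddBelow W := ⟨b - π, fun t ht => ht.1.1.le⟩
    have hbddA : BddAbove W := ⟨b, fun t ht => ht.1.2.le⟩
    have hmle : ∀ t ∈ W, m ≤ t := fun t ht => csInf_le hbddB ht
    have hsle : ∀ t ∈ W, t ≤ s := fun t ht => le_csSup hbddA ht
    have hm_ge : b - π ≤ m := le_csInf hWne (fun t ht => ht.1.1.le)
    have hs_le : s ≤ b := csSup_le hWne (fun t ht => ht.1.2.le)
    have hms : m ≤ s := by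
      obtain ⟨t, ht⟩ := hWne
      exact le_trans (hmle t ht) (hsle t ht)
    -- strict bounds
    have hm_gt : b - π < m := by
      obtain ⟨δ₀, hδ₀, hstep⟩ := step_right Φ f (b - π)
      have hW0 : ∀ t ∈ W, b - π + δ₀ < t := by
        intro t ht
        by_contra hcon
        push_neg at hcon
        have hδ : 0 < t - (b - π) := by linarith [ht.1.1]
        have := hstep (t - (b - π)) hδ (by linarith)
        simp only [← hNdef] at this
        rw [show b - π + (t - (b - π)) = t by ring] at this
        rw [show b - π + π = b by ring, hcard_b, add_zero] at this
        have := ht.2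
        omega
      have : b - π + δ₀ ≤ m := le_csInf hWne (fun t ht => (hW0 t ht).le)
      linarith
    have hs_lt : s < b := by
      obtain ⟨δ₀, hδ₀, hstep⟩ := step_left Φ f b
      have hW0 : ∀ t ∈ W, t < b - δ₀ := by
        intro t ht
        by_contra hcon
        push_neg at hcon
        have hδ : 0 < b - t := by linarith [ht.1.2]
        have := hstep (b - t) hδ (by linarith)
        simp only [← hNdef] at this
        rw [show b - (b - t) = t by ring, hcard_b, add_zero] at this
        have := ht.2
        omega
      have : s ≤ b - δ₀ := csSup_le hWne (fun t ht => (hW0 t ht).le)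
      linarith
    -- N m = k - 1 and N s = k - 1
    have hNm : N m = k - 1 := by
      obtain ⟨δ₀, hδ₀, hstep⟩ := step_right Φ f m
      obtain ⟨t, htW, htlt⟩ := Real.lt_sInf_add_pos hWne hδ₀
      rcases eq_or_lt_of_le (hmle t htW) with heq | hlt
      · rw [heq]; exact htW.2
      · have hst := hstep (t - m) (by linarith) (by rw [← hm] at htlt; linarith)
        simp only [← hNdef] at hst
        rw [show m + (t - m) = t by ring] at hst
        have hNt : N t = k - 1 := htW.2
        have hNm_lb : k ≤ N m + 1 := hNlb m (by linarith) (by linarith)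
        omega
    have hNs : N s = k - 1 := by
      obtain ⟨δ₀, hδ₀, hstep⟩ := step_left Φ f s
      obtain ⟨t, htW, htlt⟩ := Real.add_neg_lt_sSup hWne (by linarith : -δ₀ < 0)
      rcases eq_or_lt_of_le (hsle t htW) with heq | hlt
      · rw [← heq]; exact htW.2
      · have hst := hstep (s - t) (by linarith) (by rw [← hs] at htlt; linarith)
        simp only [← hNdef] at hst
        rw [show s - (s - t) = t by ring] at hst
        have hNt : N t = k - 1 := htW.2
        have hNs_lb : k ≤ N s + 1 := hNlb s (by linarith) (by linarith)
        omega
    -- existence of the endpoint witnesses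
    have hc : ∃ c ∈ Φ, f c = m := by
      obtain ⟨δ₀, hδ₀, hstep⟩ := step_left Φ f m
      set δ := min δ₀ ((m - (b - π))/2) with hδdef
      have hδpos : 0 < δ := by
        apply lt_min hδ₀
        linarith
      have hst := hstep δ hδpos (min_le_left _ _)
      simp only [← hNdef] at hst
      have hmδ1 : b - π < m - δ := by
        have : δ ≤ (m - (b - π))/2 := min_le_right _ _
        linarith
      have hmδ2 : m - δ < b := by linarith
      have hnotW : N (m - δ) ≠ k - 1 := by
        intro hcon
        have : (m - δ) ∈ W := ⟨⟨hmδ1, hmδ2⟩, hcon⟩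
        have := hmle _ this
        linarith
      have hlb : k ≤ N (m - δ) + 1 := hNlb _ (by linarith) (by linarith)
      have hge : k ≤ N (m - δ) := by omega
      have hcard : 1 ≤ (Φ.filter fun z => f z = m).card := by omega
      obtain ⟨c, hc⟩ := Finset.card_pos.mp hcard
      exact ⟨c, (Finset.mem_filter.mp hc).1, (Finset.mem_filter.mp hc).2⟩
    obtain ⟨c, hcΦ, hfc⟩ := hc
    have hd : ∃ d ∈ Φ, f d = s + π := by
      obtain ⟨δ₀, hδ₀, hstep⟩ := step_right Φ f s
      set δ := min δ₀ ((b - s)/2) with hδdef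
      have hδpos : 0 < δ := by
        apply lt_min hδ₀
        linarith
      have hst := hstep δ hδpos (min_le_left _ _)
      simp only [← hNdef] at hst
      have hsδ1 : b - π < s + δ := by linarith
      have hsδ2 : s + δ < b := by
        have : δ ≤ (b - s)/2 := min_le_right _ _
        linarith
      have hnotW : N (s + δ) ≠ k - 1 := by
        intro hcon
        have : (s + δ) ∈ W := ⟨⟨hsδ1, hsδ2⟩, hcon⟩
        have := hsle _ this
        linarith
      have hlb : k ≤ N (s + δ) + 1 := hNlb _ (by linarith) (by linarith)
      have hge : k ≤ N (s + δ) := by omega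
      have hcard : 1 ≤ (Φ.filter fun z => f z = s + π).card := by omega
      obtain ⟨d, hd⟩ := Finset.card_pos.mp hcard
      exact ⟨d, (Finset.mem_filter.mp hd).1, (Finset.mem_filter.mp hd).2⟩
    obtain ⟨d, hdΦ, hfd⟩ := hd
    -- existence of a usable γ
    have hcand : ∃ γ ∈ Φ, (f γ ≤ m ∨ s + π ≤ f γ) ∧ -γ ∉ Φ := by
      by_contra hall
      push_neg at hall
      -- all candidates have antipodes in Φ; derive a contradiction by counting
      have hnegc : -c ∈ Φ := hall c hcΦ (Or.inl hfc.le)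
      have hnegd : -d ∈ Φ := hall d hdΦ (Or.inr hfd.ge)
      have hfnc : f (-c) = m + π := by
        rw [hfdef, theta_neg hβ1 (hΦ c hcΦ), ← hfdef, hfc, if_pos (by rw [← hb]; linarith)]
      have hfnd : f (-d) = s := by
        rw [hfdef, theta_neg hβ1 (hΦ d hdΦ), ← hfdef, hfd,
          if_neg (by rw [← hb]; push_neg; linarith)]
        ring
      have hcard_s : (Φ.filter fun z => f z = s).card = 1 := hcard_eq s (-d) hnegd hfnd
      have hcard_sπ : (Φ.filter fun z => f z = s + π).card = 1 := hcard_eq (s+π) d hdΦ hfd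
      have hcard_mπ : (Φ.filter fun z => f z = m + π).card = 1 := hcard_eq (m+π) (-c) hnegc hfnc
      -- the witness arc
      set w₁ : ℂ := -(Complex.exp ((s : ℝ) * Complex.I)) with hw₁def
      have hw₁u : ‖w₁‖ = 1 := by
        rw [hw₁def, norm_neg]
        exact Complex.norm_exp_ofReal_mul_I s
      have him_w₁ : ∀ z : ℂ, ‖z‖ = 1 →
          (z * (starRingEnd ℂ) w₁).im = -Real.sin (f z - s) := by
        intro z hz
        rw [hw₁def, map_neg, mul_neg, Complex.neg_im, im_mul_conj_exp hβ1 hz]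
      have hcnt_w₁ : cnt Φ w₁ = (Φ.filter fun z => f z < s ∨ s + π < f z).card := by
        rw [cnt]
        congr 1
        apply Finset.filter_congr
        intro z hz
        rw [him_w₁ z (hΦ z hz)]
        have r1 : -(2*π) ≤ f z - s := by
          have := theta_lb (β := β) (z := z)
          rw [← hfdef, ← hb] at this
          linarith
        have r2 : f z - s < 2*π := by
          have := theta_ub (β := β) (z := z)
          rw [← hfdef, ← hb] at this
          linarith
        have : (0 < -Real.sin (f z - s)) ↔ Real.sin (f z - s) < 0 := by
          constructor <;> intro <;> linarith
        rw [this, sin_neg_iff r1 r2]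
        constructor
        · rintro (⟨h1, h2⟩ | h)
          · exact Or.inl (by linarith)
          · exact Or.inr (by linarith)
        · rintro (h | h)
          · have := theta_lb (β := β) (z := z)
            rw [← hfdef, ← hb] at this
            exact Or.inl ⟨by linarith, by linarith⟩
          · exact Or.inr (by linarith)
      have hlow : k ≤ cnt Φ w₁ := by
        have h1 := hreg w₁ hw₁u
        have hβno : ¬ (0 < (β * (starRingEnd ℂ) w₁).im) := by
          rw [him_w₁ β hβ1]
          have hfβ : f β = b := theta_self hβ1
          rw [hfβ]
          have : 0 < Real.sin (b - s) :=
            Real.sin_pos_of_pos_of_lt_pi (by linarith) (by linarith)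
          push_neg
          linarith
        rwa [cnt_insert Φ β hβ2, if_neg hβno, add_zero] at h1
      -- counting sets
      set PL := Φ.filter (fun z => f z ≤ m) with hPL
      set PH := Φ.filter (fun z => s + π ≤ f z) with hPH
      set SA := Φ.filter (fun z => m < f z ∧ f z ≤ s) with hSA
      set SB := Φ.filter (fun z => s < f z ∧ f z < m + π) with hSB
      -- identity 1
      have e1 : ∀ z ∈ Φ, (f z ≤ s ∨ s + π ≤ f z) ↔
          (((f z < s ∨ s + π < f z) ∨ f z = s) ∨ f z = s + π) := by
        intro z hz
        constructor
        · rintro (h | h)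
          · rcases lt_or_eq_of_le h with h' | h'
            · exact Or.inl (Or.inl (Or.inl h'))
            · exact Or.inl (Or.inr h')
          · rcases lt_or_eq_of_le h with h' | h'
            · exact Or.inl (Or.inl (Or.inr h'))
            · exact Or.inr h'.symm
        · rintro (((h | h) | h) | h)
          · exact Or.inl h.le
          · exact Or.inr h.le
          · exact Or.inl h.le
          · exact Or.inr h.ge
      have u0 : (Φ.filter fun z => f z ≤ s ∨ s + π ≤ f z)
          = (Φ.filter fun z => ((f z < s ∨ s + π < f z) ∨ f z = s) ∨ f z = s + π) :=
        Finset.filter_congr e1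
      have u1 : (Φ.filter fun z => ((f z < s ∨ s + π < f z) ∨ f z = s) ∨ f z = s + π).card
          = (Φ.filter fun z => (f z < s ∨ s + π < f z) ∨ f z = s).card
            + (Φ.filter fun z => f z = s + π).card := by
        apply card_filter_or_disj
        rintro z hz ((h | h) | h) h2 <;> linarith
      have u2 : (Φ.filter fun z => (f z < s ∨ s + π < f z) ∨ f z = s).card
          = (Φ.filter fun z => f z < s ∨ s + π < f z).card
            + (Φ.filter fun z => f z = s).card := by
        apply card_filter_or_disj
        rintro z hz (h | h) h2 <;> linarith
      have hA1 : (Φ.filter fun z => f z ≤ s ∨ s + π ≤ f z).card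
          = (Φ.filter fun z => f z < s ∨ s + π < f z).card
            + (Φ.filter fun z => f z = s).card
            + (Φ.filter fun z => f z = s + π).card := by
        rw [u0, u1, u2]
      have e2 : ∀ z ∈ Φ, (f z ≤ s ∨ s + π ≤ f z) ↔
          ((f z ≤ m ∨ (m < f z ∧ f z ≤ s)) ∨ s + π ≤ f z) := by
        intro z hz
        constructor
        · rintro (h | h)
          · rcases le_or_gt (f z) m with h' | h'
            · exact Or.inl (Or.inl h')
            · exact Or.inl (Or.inr ⟨h', h⟩)
          · exact Or.inr h
        · rintro ((h | ⟨h1, h2⟩) | h)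
          · exact Or.inl (by linarith)
          · exact Or.inl h2
          · exact Or.inr h
      have v0 : (Φ.filter fun z => f z ≤ s ∨ s + π ≤ f z)
          = (Φ.filter fun z => (f z ≤ m ∨ (m < f z ∧ f z ≤ s)) ∨ s + π ≤ f z) :=
        Finset.filter_congr e2
      have v1 : (Φ.filter fun z => (f z ≤ m ∨ (m < f z ∧ f z ≤ s)) ∨ s + π ≤ f z).card
          = (Φ.filter fun z => f z ≤ m ∨ (m < f z ∧ f z ≤ s)).card
            + (Φ.filter fun z => s + π ≤ f z).card := by
        apply card_filter_or_disj
        rintro z hz (h | ⟨h1, h2⟩) h3 <;> linarith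
      have v2 : (Φ.filter fun z => f z ≤ m ∨ (m < f z ∧ f z ≤ s)).card
          = (Φ.filter fun z => f z ≤ m).card
            + (Φ.filter fun z => m < f z ∧ f z ≤ s).card := by
        apply card_filter_or_disj
        rintro z hz h1 ⟨h2, h3⟩
        linarith
      have hA2 : (Φ.filter fun z => f z ≤ s ∨ s + π ≤ f z).card
          = PL.card + SA.card + PH.card := by
        rw [v0, v1, v2, hPL, hSA, hPH]
      have hlow2 : k + 2 ≤ PL.card + SA.card + PH.card := by
        rw [← hA2, hA1] at *
        omega
      -- upper bound by the antipodal injection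
      set T := Φ.filter (fun y => s ≤ f y ∧ f y ≤ m + π) with hT
      have hmap : ∀ z ∈ PL ∪ PH, -z ∈ T := by
        intro z hz
        rcases Finset.mem_union.mp hz with hz' | hz'
        · obtain ⟨hzΦ, hcond⟩ := Finset.mem_filter.mp hz'
          have hneg : -z ∈ Φ := hall z hzΦ (Or.inl hcond)
          have hfz : f (-z) = f z + π := by
            rw [hfdef, theta_neg hβ1 (hΦ z hzΦ), ← hfdef, if_pos (by rw [← hb]; linarith)]
          refine Finset.mem_filter.mpr ⟨hneg, ?_, ?_⟩
          · rw [hfz]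
            have := theta_lb (β := β) (z := z)
            rw [← hfdef, ← hb] at this
            linarith
          · rw [hfz]; linarith
        · obtain ⟨hzΦ, hcond⟩ := Finset.mem_filter.mp hz'
          have hneg : -z ∈ Φ := hall z hzΦ (Or.inr hcond)
          have hfz : f (-z) = f z - π := by
            rw [hfdef, theta_neg hβ1 (hΦ z hzΦ), ← hfdef,
              if_neg (by rw [← hb]; push_neg; linarith)]
          refine Finset.mem_filter.mpr ⟨hneg, ?_, ?_⟩
          · rw [hfz]; linarith
          · rw [hfz]
            have := theta_ub (β := β) (z := z)
            rw [← hfdef, ← hb] at this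
            linarith
      have hinj : (PL ∪ PH).card ≤ T.card := by
        apply Finset.card_le_card_of_injOn (fun z => -z) hmap
        intro a _ b _ h
        simpa using h
      have hPLPH : (PL ∪ PH).card = PL.card + PH.card := by
        apply Finset.card_union_of_disjoint
        rw [hPL, hPH, Finset.disjoint_filter]
        intro z hz h1 h2
        linarith
      have hTcard : T.card ≤ 1 + SB.card + 1 := by
        have hsub : T ⊆ (Φ.filter fun z => f z = s) ∪ SB ∪ (Φ.filter fun z => f z = m + π) := by
          intro z hz
          obtain ⟨hzΦ, h1, h2⟩ := Finset.mem_filter.mp hz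
          rcases eq_or_lt_of_le h1 with h | h
          · exact Finset.mem_union.mpr (Or.inl (Finset.mem_union.mpr (Or.inl
              (Finset.mem_filter.mpr ⟨hzΦ, h.symm⟩))))
          · rcases eq_or_lt_of_le h2 with h' | h'
            · exact Finset.mem_union.mpr (Or.inr (Finset.mem_filter.mpr ⟨hzΦ, h'⟩))
            · exact Finset.mem_union.mpr (Or.inl (Finset.mem_union.mpr (Or.inr
                (Finset.mem_filter.mpr ⟨hzΦ, h, h'⟩))))
        calc T.card ≤ _ := Finset.card_le_card hsub
        _ ≤ ((Φ.filter fun z => f z = s) ∪ SB).card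
              + (Φ.filter fun z => f z = m + π).card := Finset.card_union_le _ _
        _ ≤ ((Φ.filter fun z => f z = s).card + SB.card)
              + (Φ.filter fun z => f z = m + π).card := by
            have := Finset.card_union_le (Φ.filter fun z => f z = s) SB
            omega
        _ = 1 + SB.card + 1 := by rw [hcard_s, hcard_mπ]
      -- N m = SA + SB
      have hNm' : SA.card + SB.card = k - 1 := by
        have e3 : ∀ z ∈ Φ, (m < f z ∧ f z < m + π) ↔
            ((m < f z ∧ f z ≤ s) ∨ (s < f z ∧ f z < m + π)) := by
          intro z hz
          constructor
          · rintro ⟨h1, h2⟩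
            rcases le_or_gt (f z) s with h | h
            · exact Or.inl ⟨h1, h⟩
            · exact Or.inr ⟨h, h2⟩
          · rintro (⟨h1, h2⟩ | ⟨h1, h2⟩)
            · exact ⟨h1, by linarith⟩
            · exact ⟨by linarith, h2⟩
        have w0 : (Φ.filter fun z => m < f z ∧ f z < m + π)
            = (Φ.filter fun z => (m < f z ∧ f z ≤ s) ∨ (s < f z ∧ f z < m + π)) :=
          Finset.filter_congr e3
        have w1 : (Φ.filter fun z => (m < f z ∧ f z ≤ s) ∨ (s < f z ∧ f z < m + π)).card
            = (Φ.filter fun z => m < f z ∧ f z ≤ s).card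
              + (Φ.filter fun z => s < f z ∧ f z < m + π).card := by
          apply card_filter_or_disj
          rintro z hz ⟨h1, h2⟩ ⟨h3, h4⟩
          linarith
        have hx : (Φ.filter fun z => m < f z ∧ f z < m + π).card = k - 1 := hNm
        rw [w0, w1] at hx
        rw [hSA, hSB]
        exact hx
      -- contradiction
      rw [hcnt_w₁] at hlow
      omega
    obtain ⟨γ, hγΦ, hγcond, hγn⟩ := hcand
    refine ⟨γ, hγΦ, hγn, key γ hγΦ hγn ?_⟩
    intro t ht1 ht2 hNt
    have htW : t ∈ W := ⟨⟨ht1, ht2⟩, hNt⟩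
    have h1 := hmle t htW
    have h2 := hsle t htW
    rintro ⟨hg1, hg2⟩
    rcases hγcond with h | h
    · linarith
    · linarith
  · -- W empty: the given non-antipodal point works
    refine ⟨α, hαΦ, hαn, key α hαΦ hαn ?_⟩
    intro t ht1 ht2 hNt _
    exact hWne ⟨t, ⟨ht1, ht2⟩, hNt⟩

lemma theta_exp {γ : ℂ} (hγ : ‖γ‖ = 1) {v : ℝ}
    (h1 : γ.arg - π < v) (h2 : v ≤ γ.arg + π) :
    theta γ (Complex.exp ((v : ℝ) * Complex.I)) = v := by
  have hπ := Real.pi_pos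
  have hzu : ‖Complex.exp ((v : ℝ) * Complex.I)‖ = 1 :=
    Complex.norm_exp_ofReal_mul_I v
  set T := theta γ (Complex.exp ((v : ℝ) * Complex.I)) with hT
  have hexp : Complex.exp ((T : ℝ) * Complex.I) = Complex.exp ((v : ℝ) * Complex.I) :=
    exp_theta hγ hzu
  have hone : Complex.exp (((T - v : ℝ) : ℂ) * Complex.I) = 1 := by
    rw [Complex.ofReal_sub, sub_mul, Complex.exp_sub, hexp, div_self (Complex.exp_ne_zero _)]
  obtain ⟨n, hn⟩ := Complex.exp_eq_one_iff.mp hone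
  have hreal : T - v = n * (2 * π) := by
    rw [show ((n : ℂ) * (2 * ↑π * Complex.I)) = ((n * (2*π) : ℝ) : ℂ) * Complex.I by push_cast; ring] at hn
    have := mul_right_cancel₀ Complex.I_ne_zero hn
    exact_mod_cast this
  have b1 : γ.arg - π < T := theta_lb
  have b2 : T ≤ γ.arg + π := theta_ub
  have hn0 : n = 0 := by
    have l1 : (n : ℝ) * (2*π) < 2*π := by linarith
    have l2 : -(2*π) < (n:ℝ) * (2*π) := by linarith
    have i1 : (n:ℝ) < 1 := by nlinarith
    have i2 : (-1 : ℝ) < (n:ℝ) := by nlinarith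
    have i1' : n < 1 := by exact_mod_cast i1
    have i2' : (-1:ℤ) < n := by exact_mod_cast i2
    omega
  rw [hn0] at hreal
  push_cast at hreal
  linarith

set_option maxHeartbeats 2000000 in
lemma backward {k : ℕ} (hk : 1 < k) (Φ : Finset ℂ)
    (hΦ : ∀ z ∈ Φ, ‖z‖ = 1)
    {γ : ℂ} (hγΦ : γ ∈ Φ) (hγn : -γ ∉ Φ)
    (hreg : ∀ w : ℂ, ‖w‖ = 1 → k - 1 ≤ cnt (Φ.erase γ) w) :
    ∃ β : ℂ, ‖β‖ = 1 ∧ β ∉ Φ ∧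
      ∀ w : ℂ, ‖w‖ = 1 → k ≤ cnt (insert β Φ) w := by
  have hπ := Real.pi_pos
  have hγ1 : ‖γ‖ = 1 := hΦ γ hγΦ
  set g := γ.arg with hg
  set f : ℂ → ℝ := theta γ with hfdef
  set Φ' := Φ.erase γ with hΦ'def
  have hΦ'sub : ∀ z ∈ Φ', z ∈ Φ := fun z hz => Finset.mem_of_mem_erase hz
  have hΦ'u : ∀ z ∈ Φ', ‖z‖ = 1 := fun z hz => hΦ z (hΦ'sub z hz)
  have hγΦ' : γ ∉ Φ' := Finset.notMem_erase γ Φ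
  have hfγ : f γ = g := theta_self hγ1
  have hγn1 : ‖-γ‖ = 1 := by rw [norm_neg]; exact hγ1
  have hfnγ : f (-γ) = g + π := by
    rw [hfdef, theta_neg hγ1 hγ1, theta_self hγ1, if_pos le_rfl, hg]
  have hne_g : ∀ z ∈ Φ', f z ≠ g := fun z hz h =>
    (Finset.ne_of_mem_erase hz) (theta_inj hγ1 (hΦ'u z hz) hγ1 (h.trans hfγ.symm))
  have hne_gπ : ∀ z ∈ Φ', f z ≠ g + π := fun z hz h =>
    hγn ((theta_inj hγ1 (hΦ'u z hz) hγn1 (h.trans hfnγ.symm)) ▸ hΦ'sub z hz)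
  have hrange : ∀ z ∈ Φ', g - π < f z ∧ f z < g + π := by
    intro z hz
    exact ⟨theta_lb, lt_of_le_of_ne theta_ub (hne_gπ z hz)⟩
  -- choice of ε
  set Tm : Finset ℝ := (Φ'.image fun z => |f z - g|) ∪ (Φ'.image fun z => π - |f z - g|)
    with hTm
  have hTmpos : ∀ x ∈ Tm, 0 < x := by
    intro x hx
    rcases Finset.mem_union.mp hx with h | h
    · obtain ⟨z, hz, rfl⟩ := Finset.mem_image.mp h
      exact abs_pos.mpr (sub_ne_zero.mpr (hne_g z hz))
    · obtain ⟨z, hz, rfl⟩ := Finset.mem_image.mp h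
      have hr := hrange z hz
      have : |f z - g| < π := abs_lt.mpr ⟨by linarith, by linarith⟩
      linarith
  obtain ⟨ε₁, hε₁pos, hε₁⟩ := exists_eps Tm hTmpos
  set ε := min ε₁ (π/4) with hεdef
  have hεpos : 0 < ε := lt_min hε₁pos (by linarith)
  have hεlt : ε < π/2 := lt_of_le_of_lt (min_le_right _ _) (by linarith)
  have hsep : ∀ z ∈ Φ', ε < |f z - g| ∧ |f z - g| < π - ε := by
    intro z hz
    constructor
    · exact lt_of_le_of_lt (min_le_left _ _)
        (hε₁ _ (Finset.mem_union_left _ (Finset.mem_image_of_mem _ hz)))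
    · have h1 : ε₁ < π - |f z - g| := hε₁ _ (Finset.mem_union_right _
        (Finset.mem_image_of_mem (fun z => π - |f z - g|) hz))
      have h2 : ε ≤ ε₁ := min_le_left _ _
      linarith
  -- the two boundary counts
  set f₁ := cnt Φ' γ with hf₁def
  set f₂ := cnt Φ' (-γ) with hf₂def
  have hf₁lb : k - 1 ≤ f₁ := hreg γ hγ1
  have hf₂lb : k - 1 ≤ f₂ := hreg (-γ) hγn1
  have hf₁c : f₁ = (Φ'.filter fun z => g < f z).card := by
    rw [hf₁def, cnt]
    congr 1
    apply Finset.filter_congr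
    intro z hz
    rw [im_mul_conj_units hγ1 (hΦ'u z hz) hγ1, theta_self hγ1]
    simp only [← hfdef, ← hg]
    have hr := hrange z hz
    have hne := hne_gπ z hz
    rw [sin_pos_iff (by linarith) (by linarith)]
    constructor
    · rintro (⟨h1, h2⟩ | h)
      · exact by linarith
      · exfalso; linarith
    · intro h
      left
      constructor
      · linarith
      · rcases lt_or_eq_of_le hr.2.le with h' | h'
        · linarith
        · exact absurd h' hne
  have hf₂c : f₂ = (Φ'.filter fun z => f z < g).card := by
    rw [hf₂def, cnt]
    congr 1
    apply Finset.filter_congr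
    intro z hz
    rw [im_mul_conj_units hγ1 (hΦ'u z hz) hγn1]
    rw [show theta γ (-γ) = g + π from hfnγ]
    simp only [← hfdef]
    have hr := hrange z hz
    rw [sin_pos_iff (by linarith) (by linarith)]
    constructor
    · rintro (⟨h1, h2⟩ | h)
      · exact by linarith
      · exact by linarith
    · intro h
      right
      linarith
  have htot : f₁ + f₂ = Φ'.card := by
    rw [hf₁c, hf₂c]
    have hpart := Finset.card_filter_add_card_filter_not
      (s := Φ') (p := fun z => g < f z)
    have hcongr : (Φ'.filter fun z => ¬ g < f z) = (Φ'.filter fun z => f z < g) := by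
      apply Finset.filter_congr
      intro z hz
      have := hne_g z hz
      constructor
      · intro h
        push_neg at h
        rcases lt_or_eq_of_le h with h' | h'
        · exact h'
        · exact absurd h' this
      · intro h
        push_neg
        linarith
    rw [hcongr] at hpart
    omega
  have hnboth : ¬ (f₁ ≤ k - 1 ∧ f₂ ≤ k - 1) := by
    rintro ⟨h1, h2⟩
    have hcard : Φ'.card ≤ 2*(k-1) := by omega
    have hne : Φ'.Nonempty := by
      rw [← Finset.card_pos]
      omega
    obtain ⟨p, hp⟩ := hne
    have hp1 : ‖p‖ = 1 := hΦ'u p hp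
    have hpn1 : ‖-p‖ = 1 := by rw [norm_neg]; exact hp1
    have hpair := cnt_pair Φ' hΦ'u p
    have hzmem : p ∈ Φ'.filter (fun z => (z * (starRingEnd ℂ) p).im = 0) :=
      Finset.mem_filter.mpr ⟨hp, by rw [mul_conj_self hp1]; rfl⟩
    have hz1 : 1 ≤ (Φ'.filter fun z => (z * (starRingEnd ℂ) p).im = 0).card :=
      Finset.card_pos.mpr ⟨p, hzmem⟩
    have ha := hreg p hp1
    have hb := hreg (-p) hpn1
    omega
  -- decomposition of counts over `insert x Φ`
  have hsplit : ∀ x : ℂ, x ∉ Φ → ∀ w : ℂ,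
      cnt (insert x Φ) w = cnt Φ' w
        + (if 0 < (γ * (starRingEnd ℂ) w).im then 1 else 0)
        + (if 0 < (x * (starRingEnd ℂ) w).im then 1 else 0) := by
    intro x hx w
    rw [cnt_insert Φ x hx w]
    congr 1
    have h1 : Φ = insert γ Φ' := (Finset.insert_erase hγΦ).symm
    rw [h1]
    exact cnt_insert Φ' γ hγΦ' w
  -- branches
  by_cases hc1 : f₁ = k - 1
  · -- deficient at γ: use β = exp((g+π-ε) i)
    have hf₂k : k ≤ f₂ := by
      have : ¬ f₂ ≤ k - 1 := fun h => hnboth ⟨le_of_eq hc1, h⟩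
      omega
    set v := g + π - ε with hvdef
    set β := Complex.exp ((v : ℝ) * Complex.I) with hβdef
    have hβ1 : ‖β‖ = 1 := Complex.norm_exp_ofReal_mul_I v
    have hfβ : theta γ β = v := theta_exp hγ1 (by rw [← hg]; linarith) (by rw [← hg]; linarith)
    have hβΦ : β ∉ Φ := by
      intro hmem
      by_cases hβγ : β = γ
      · rw [hβγ] at hfβ
        have : theta γ γ = g := theta_self hγ1
        rw [this] at hfβ
        linarith
      · have hβΦ' : β ∈ Φ' := Finset.mem_erase.mpr ⟨hβγ, hmem⟩
        have := (hsep β hβΦ').2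
        have hfb : f β = v := hfβ
        rw [hfb, hvdef] at this
        rw [show g + π - ε - g = π - ε by ring] at this
        rw [abs_of_pos (by linarith)] at this
        linarith
    refine ⟨β, hβ1, hβΦ, ?_⟩
    intro w hw
    rw [hsplit β hβΦ w]
    set ψ := theta γ w with hψdef
    have hψ1 : g - π < ψ := theta_lb
    have hψ2 : ψ ≤ g + π := theta_ub
    have hγim : (γ * (starRingEnd ℂ) w).im = Real.sin (g - ψ) := by
      rw [im_mul_conj_units hγ1 hγ1 hw, theta_self hγ1]
    have hβim : (β * (starRingEnd ℂ) w).im = Real.sin (v - ψ) := by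
      rw [im_mul_conj_units hγ1 hβ1 hw, hfβ]
    have hregw := hreg w hw
    rcases lt_or_ge ψ g with hcase | hcase
    · rw [if_pos (show 0 < (γ * (starRingEnd ℂ) w).im by
        rw [hγim]; exact Real.sin_pos_of_pos_of_lt_pi (by linarith) (by linarith))]
      split <;> omega
    · rcases lt_or_ge ψ v with hcase2 | hcase2
      · rw [if_pos (show 0 < (β * (starRingEnd ℂ) w).im by
          rw [hβim]; exact Real.sin_pos_of_pos_of_lt_pi (by linarith) (by linarith))]
        split <;> omega
      · -- ψ ∈ [v, g+π] : the count itself is at least k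
        have hsub : (Φ'.filter fun z => f z < g)
            ⊆ (Φ'.filter fun z => 0 < (z * (starRingEnd ℂ) w).im) := by
          intro z hz
          obtain ⟨hzΦ', hzlt⟩ := Finset.mem_filter.mp hz
          refine Finset.mem_filter.mpr ⟨hzΦ', ?_⟩
          rw [im_mul_conj_units hγ1 (hΦ'u z hzΦ') hw]
          show 0 < Real.sin (f z - ψ)
          have h1 := (hsep z hzΦ').1
          have h2 := (hsep z hzΦ').2
          have h3 : ε < g - f z := by
            rwa [abs_of_neg (by linarith : f z - g < 0), neg_sub] at h1
          have h4 : -(π - ε) < f z - g := (abs_lt.mp h2).1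
          refine (sin_pos_iff ?_ ?_).mpr (Or.inr ?_) <;> linarith
        have hkk : f₂ ≤ cnt Φ' w := by
          rw [hf₂c]
          exact Finset.card_le_card hsub
        split <;> split <;> omega
  · have hf₁k : k ≤ f₁ := by omega
    by_cases hc2 : f₂ = k - 1
    · -- deficient at -γ: use β = exp((g-π+ε) i)
      set v := g - π + ε with hvdef
      set β := Complex.exp ((v : ℝ) * Complex.I) with hβdef
      have hβ1 : ‖β‖ = 1 := Complex.norm_exp_ofReal_mul_I v
      have hfβ : theta γ β = v := theta_exp hγ1 (by rw [← hg]; linarith) (by rw [← hg]; linarith)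
      have hβΦ : β ∉ Φ := by
        intro hmem
        by_cases hβγ : β = γ
        · rw [hβγ] at hfβ
          have : theta γ γ = g := theta_self hγ1
          rw [this] at hfβ
          linarith
        · have hβΦ' : β ∈ Φ' := Finset.mem_erase.mpr ⟨hβγ, hmem⟩
          have := (hsep β hβΦ').2
          have hfb : f β = v := hfβ
          rw [hfb, hvdef] at this
          rw [show g - π + ε - g = -(π - ε) by ring] at this
          rw [abs_neg, abs_of_pos (by linarith)] at this
          linarith
      refine ⟨β, hβ1, hβΦ, ?_⟩
      intro w hw
      rw [hsplit β hβΦ w]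
      set ψ := theta γ w with hψdef
      have hψ1 : g - π < ψ := theta_lb
      have hψ2 : ψ ≤ g + π := theta_ub
      have hγim : (γ * (starRingEnd ℂ) w).im = Real.sin (g - ψ) := by
        rw [im_mul_conj_units hγ1 hγ1 hw, theta_self hγ1]
      have hβim : (β * (starRingEnd ℂ) w).im = Real.sin (v - ψ) := by
        rw [im_mul_conj_units hγ1 hβ1 hw, hfβ]
      have hregw := hreg w hw
      rcases lt_or_ge ψ g with hcase | hcase
      · rw [if_pos (show 0 < (γ * (starRingEnd ℂ) w).im by
          rw [hγim]; exact Real.sin_pos_of_pos_of_lt_pi (by linarith) (by linarith))]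
        split <;> omega
      · rcases le_or_gt ψ (g + ε) with hcase2 | hcase2
        · -- ψ ∈ [g, g+ε] : the count itself is at least k
          have hsub : (Φ'.filter fun z => g < f z)
              ⊆ (Φ'.filter fun z => 0 < (z * (starRingEnd ℂ) w).im) := by
            intro z hz
            obtain ⟨hzΦ', hzlt⟩ := Finset.mem_filter.mp hz
            refine Finset.mem_filter.mpr ⟨hzΦ', ?_⟩
            rw [im_mul_conj_units hγ1 (hΦ'u z hzΦ') hw]
            show 0 < Real.sin (f z - ψ)
            have h1 := (hsep z hzΦ').1
            have h2 := (hsep z hzΦ').2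
            have h3 : ε < f z - g := by
              rwa [abs_of_pos (by linarith : 0 < f z - g)] at h1
            have h4 : f z - g < π - ε := (abs_lt.mp h2).2
            refine (sin_pos_iff ?_ ?_).mpr (Or.inl ⟨?_, ?_⟩) <;> linarith
          have hkk : f₁ ≤ cnt Φ' w := by
            rw [hf₁c]
            exact Finset.card_le_card hsub
          split <;> split <;> omega
        · rw [if_pos (show 0 < (β * (starRingEnd ℂ) w).im by
            rw [hβim]
            refine (sin_pos_iff ?_ ?_).mpr (Or.inr ?_) <;> linarith)]
          split <;> omega
    · -- both at least k: use β = -γ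
      have hf₂k : k ≤ f₂ := by omega
      refine ⟨-γ, hγn1, hγn, ?_⟩
      intro w hw
      rw [hsplit (-γ) hγn w]
      set ψ := theta γ w with hψdef
      have hψ1 : g - π < ψ := theta_lb
      have hψ2 : ψ ≤ g + π := theta_ub
      have hγim : (γ * (starRingEnd ℂ) w).im = Real.sin (g - ψ) := by
        rw [im_mul_conj_units hγ1 hγ1 hw, theta_self hγ1]
      have hβim : ((-γ) * (starRingEnd ℂ) w).im = Real.sin (g + π - ψ) := by
        rw [im_mul_conj_units hγ1 hγn1 hw, show theta γ (-γ) = g + π from hfnγ]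
      have hregw := hreg w hw
      rcases lt_trichotomy ψ g with hcase | hcase | hcase
      · rw [if_pos (show 0 < (γ * (starRingEnd ℂ) w).im by
          rw [hγim]; exact Real.sin_pos_of_pos_of_lt_pi (by linarith) (by linarith))]
        split <;> omega
      · -- w = γ
        have hwγ : w = γ := theta_inj hγ1 hw hγ1 (by rw [← hψdef, hcase, ← hfγ])
        rw [hwγ]
        have : cnt Φ' γ = f₁ := hf₁def.symm
        split <;> split <;> omega
      · rcases lt_or_eq_of_le hψ2 with hcase2 | hcase2
        · rw [if_pos (show 0 < ((-γ) * (starRingEnd ℂ) w).im by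
            rw [hβim]; exact Real.sin_pos_of_pos_of_lt_pi (by linarith) (by linarith))]
          split <;> omega
        · -- w = -γ
          have hwγ : w = -γ := theta_inj hγ1 hw hγn1 (by rw [← hψdef, hcase2, ← hfnγ])
          rw [hwγ]
          have : cnt Φ' (-γ) = f₂ := hf₂def.symm
          split <;> split <;> omega

end Stmt15

/-- For a finite subset of the unit circle with a non-antipodal point,
one can add a point to make it k-regular iff one can delete a non-antipodal point to
make it (k-1)-regular. -/
theorem stmt15 {k : ℕ} (hk : 1 < k) (Φ : Finset ℂ)
    (hΦ : ∀ z ∈ Φ, ‖z‖ = 1)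
    (hna : ∃ α ∈ Φ, -α ∉ Φ) :
    (∃ β : ℂ, ‖β‖ = 1 ∧ β ∉ Φ ∧ IsKRegular k ↑(insert β Φ)) ↔
    (∃ γ ∈ Φ, -γ ∉ Φ ∧ IsKRegular (k - 1) ↑(Φ.erase γ)) := by
  constructor
  · rintro ⟨β, hβ1, hβ2, hregK⟩
    obtain ⟨α, hαΦ, hαn⟩ := hna
    have hins : ∀ z ∈ insert β Φ, ‖z‖ = 1 := by
      intro z hz
      rcases Finset.mem_insert.mp hz with rfl | hz
      · exact hβ1
      · exact hΦ z hz
    have hreg := (Stmt15.isKRegular_iff k (insert β Φ) hins).mp hregK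
    obtain ⟨γ, h1, h2, h3⟩ := Stmt15.forward hk Φ hΦ hαΦ hαn hβ1 hβ2 hreg
    refine ⟨γ, h1, h2, ?_⟩
    exact (Stmt15.isKRegular_iff (k-1) (Φ.erase γ)
      (fun z hz => hΦ z (Finset.mem_of_mem_erase hz))).mpr h3
  · rintro ⟨γ, hγΦ, hγn, hregK⟩
    have hreg := (Stmt15.isKRegular_iff (k-1) (Φ.erase γ)
      (fun z hz => hΦ z (Finset.mem_of_mem_erase hz))).mp hregK
    obtain ⟨β, h1, h2, h3⟩ := Stmt15.backward hk Φ hΦ hγΦ hγn hreg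
    refine ⟨β, h1, h2, ?_⟩
    have hins : ∀ z ∈ insert β Φ, ‖z‖ = 1 := by
      intro z hz
      rcases Finset.mem_insert.mp hz with rfl | hz
      · exact h1
      · exact hΦ z hz
    exact (Stmt15.isKRegular_iff k (insert β Φ) hins).mpr h3
end
end
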